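/- arXiv:2601.18041 — 3 statements merged into one kernel-verified Lean document; each statement's English description precedes it below -/
import Mathlib

section
/- Homogeneity of the nc difference-differential operator: with Ω, f, (u,v) as in the Grassmannian framework, if σ ∈ Ω_n, σ' ∈ Ω_{n'}, X ∈ M_{n,n'}(A), r ∈ R and both (σ;σ')_{u,v}(X) and (σ;σ')_{u,v}(rX) belong to Ω, then (Δ̃^{(d;m)}_{u,v} f)(σ;σ')(rX) = r · (Δ̃^{(d;m)}_{u,v} f)(σ;σ')(X). -/
open Matrix

/-- `n × n` matrices over `A`. -/
abbrev Mat (A : Type) (n : ℕ) : Type := Matrix (Fin n) (Fin n) A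

/-- `m × m` block matrices with `n × n` blocks over `A`, i.e. `M_m(M_n(A))`. -/
abbrev BMat (A : Type) (m n : ℕ) : Type := Matrix (Fin m) (Fin m) (Mat A n)

section NC

variable {R : Type} [CommRing R] {A : Type} [Ring A]

/-- Membership in the subgroup `H^{(d;m)}_n(A)` of invertible block lower-triangular
matrices `[[X,0],[Y,Z]]` with `X ∈ GL_{m-d}`, `Z ∈ GL_d`. -/
def memH (m d n : ℕ) (hd : d ≤ m) (Γ : BMat A m n) : Prop :=
  IsUnit Γ ∧
  (∀ i j : Fin m, (i : ℕ) < m - d → m - d ≤ (j : ℕ) → Γ i j = 0) ∧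
  IsUnit (Matrix.of fun i j : Fin (m - d) =>
    Γ ⟨(i : ℕ), lt_of_lt_of_le i.isLt (Nat.sub_le m d)⟩
      ⟨(j : ℕ), lt_of_lt_of_le j.isLt (Nat.sub_le m d)⟩) ∧
  IsUnit (Matrix.of fun i j : Fin d =>
    Γ ⟨m - d + (i : ℕ), by have := i.isLt; omega⟩
      ⟨m - d + (j : ℕ), by have := j.isLt; omega⟩)

/-- The relation `X ~ Y` iff `X = Y Γ` for some `Γ ∈ H^{(d;m)}_n(A)`. -/
def grel (m d n : ℕ) (hd : d ≤ m) (X Y : BMat A m n) : Prop :=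
  ∃ Γ : BMat A m n, memH m d n hd Γ ∧ X = Y * Γ

/-- Direct sum of square matrices. -/
def dsumMat {n n' : ℕ} (X : Mat A n) (Y : Mat A n') : Mat A (n + n') :=
  Matrix.reindex finSumFinEquiv finSumFinEquiv (Matrix.fromBlocks X 0 0 Y)

/-- Entrywise block direct sum `X ⊕̃ Y` of elements of `M_m(M_n(A))`, `M_m(M_{n'}(A))`. -/
def dsum {m n n' : ℕ} (X : BMat A m n) (Y : BMat A m n') : BMat A m (n + n') :=
  Matrix.of fun i j => dsumMat (X i j) (Y i j)

/-- Direct sum of square matrices with entries in a module. -/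
def dsumW {W : Type} [AddCommMonoid W] {n n' : ℕ}
    (X : Matrix (Fin n) (Fin n) W) (Y : Matrix (Fin n') (Fin n') W) :
    Matrix (Fin (n + n')) (Fin (n + n')) W :=
  Matrix.reindex finSumFinEquiv finSumFinEquiv (Matrix.fromBlocks X 0 0 Y)

/-- Block upper triangular matrix `[[P, H],[0, Q]]`. -/
def triW {W : Type} [AddCommMonoid W] {n n' : ℕ}
    (P : Matrix (Fin n) (Fin n) W) (H : Matrix (Fin n) (Fin n') W)
    (Q : Matrix (Fin n') (Fin n') W) :
    Matrix (Fin (n + n')) (Fin (n + n')) W :=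
  Matrix.reindex finSumFinEquiv finSumFinEquiv (Matrix.fromBlocks P H 0 Q)

/-- The unipotent upper triangular matrix `[[I, T],[0, I]]` over `R`. -/
def uptri (R : Type) [CommRing R] {p q : ℕ} (T : Matrix (Fin p) (Fin q) R) :
    Matrix (Fin (p + q)) (Fin (p + q)) R :=
  Matrix.reindex finSumFinEquiv finSumFinEquiv (Matrix.fromBlocks 1 T 0 1)

/-- Left multiplication of a representative by `s^{⊕ m}` for a scalar matrix `s` over `R`:
the similarity action on the nc Grassmannian. -/
def simAct [Algebra R A] {m N : ℕ} (s : Matrix (Fin N) (Fin N) R) (X : BMat A m N) :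
    BMat A m N :=
  Matrix.of fun i j => s.map (algebraMap R A) * X i j

/-- Multiplication of a matrix over an `R`-module `W` by a matrix over `R` on the left. -/
def rmulL {W : Type} [AddCommMonoid W] [Module R W] {p q r : ℕ}
    (s : Matrix (Fin p) (Fin q) R) (X : Matrix (Fin q) (Fin r) W) :
    Matrix (Fin p) (Fin r) W :=
  Matrix.of fun i j => ∑ k, s i k • X k j

/-- Multiplication of a matrix over an `R`-module `W` by a matrix over `R` on the right. -/
def rmulR {W : Type} [AddCommMonoid W] [Module R W] {p q r : ℕ}
    (X : Matrix (Fin p) (Fin q) W) (s : Matrix (Fin q) (Fin r) R) :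
    Matrix (Fin p) (Fin r) W :=
  Matrix.of fun i j => ∑ k, s k j • X i k

/-- Vertical concatenation of matrices. -/
def vcat {α : Type} {p p' q : ℕ} (X : Matrix (Fin p) (Fin q) α)
    (Y : Matrix (Fin p') (Fin q) α) : Matrix (Fin (p + p')) (Fin q) α :=
  Matrix.of fun i j =>
    if h : (i : ℕ) < p then X ⟨(i : ℕ), h⟩ j
    else Y ⟨(i : ℕ) - p, by have := i.isLt; omega⟩ j

/-- The affine embedding `X ↦ [[0, I],[I, X]]` in the case `(d;m) = (1;2)`. -/
def affEmb {n : ℕ} (X : Mat A n) : BMat A 2 n := !![0, 1; 1, X]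

/-- The matrix `[[0, X],[0, 0]] ∈ M_{n+n'}(A)` with `X ∈ M_{n,n'}(A)` in the upper right
corner. -/
def cornerMat {n n' : ℕ} (X : Matrix (Fin n) (Fin n') A) : Mat A (n + n') :=
  Matrix.reindex finSumFinEquiv finSumFinEquiv (Matrix.fromBlocks 0 X 0 0)

/-- The representative `(P;Q)_{u,v}(X)` of the element `(σ;σ')_{u,v}(X)`:
`P ⊕̃ Q + Σ_{j=1}^d [[0, X Q_{v, m-d+j}],[0,0]] ⊗ e^{(m)}_{d+u, m-d+j}`. -/
def ins {m d n n' : ℕ} (hd : d ≤ m) (u : Fin (m - d)) (v : Fin d)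
    (P : BMat A m n) (Q : BMat A m n') (X : Matrix (Fin n) (Fin n') A) :
    BMat A m (n + n') :=
  dsum P Q + Matrix.of fun (i j : Fin m) =>
    if (i : ℕ) = d + (u : ℕ) ∧ m - d ≤ (j : ℕ) then
      cornerMat (X * Q ⟨(v : ℕ), lt_of_lt_of_le v.isLt hd⟩ j)
    else 0

/-- The matrix unit `e^{(md,d)}_{u,v} ⊗ X`. -/
def eMat {md d : ℕ} {n : ℕ} (u : Fin md) (v : Fin d) (X : Mat A n) :
    Matrix (Fin md) (Fin d) (Mat A n) :=
  Matrix.of fun i j => if i = u ∧ j = v then X else 0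

/-- The block matrix `[[I_d ⊗ I_n, 0],[-Y, I_{m-d} ⊗ I_n]]` used to define `σ(Y)`. -/
def shiftMat {m d n : ℕ} (hd : d ≤ m) (Y : Matrix (Fin (m - d)) (Fin d) (Mat A n)) :
    BMat A m n :=
  Matrix.of fun i j =>
    (if i = j then (1 : Mat A n) else 0) +
    (if h : d ≤ (i : ℕ) ∧ (j : ℕ) < d then
      -Y ⟨(i : ℕ) - d, by have := i.isLt; omega⟩ ⟨(j : ℕ), h.2⟩
    else 0)

/-- A family `C` of sets of representatives is an nc set over `Gr^{(d;m)}(A)`: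
it consists of invertible matrices, is saturated under the relation `~`
(i.e. it is a set of equivalence classes), and is closed under direct sums. -/
def IsNCSetCarrier {m d : ℕ} (hd : d ≤ m) (C : ∀ n, Set (BMat A m n)) : Prop :=
  (∀ n, ∀ a ∈ C n, IsUnit a) ∧
  (∀ n, ∀ a b : BMat A m n, grel m d n hd a b → (a ∈ C n ↔ b ∈ C n)) ∧
  (∀ n n', ∀ a ∈ C n, ∀ b ∈ C n', dsum a b ∈ C (n + n'))

/-- `f` is an nc function on the nc set (with carrier) `C` over `Gr^{(d;m)}(A)`:
it descends to equivalence classes, preserves direct sums, and is similarity preserving. -/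
def IsNCFun (R : Type) [CommRing R] [Algebra R A] {W : Type} [AddCommMonoid W] [Module R W]
    {m d : ℕ} (hd : d ≤ m) (C : ∀ n, Set (BMat A m n))
    (f : ∀ n, BMat A m n → Matrix (Fin n) (Fin n) W) : Prop :=
  (∀ n, ∀ a ∈ C n, ∀ b ∈ C n, grel m d n hd a b → f n a = f n b) ∧
  (∀ n n', ∀ a ∈ C n, ∀ b ∈ C n', f (n + n') (dsum a b) = dsumW (f n a) (f n' b)) ∧
  (∀ n (s : (Matrix (Fin n) (Fin n) R)ˣ), ∀ a ∈ C n,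
    simAct (s : Matrix (Fin n) (Fin n) R) a ∈ C n →
    f n (simAct (s : Matrix (Fin n) (Fin n) R) a) =
      rmulR (rmulL (s : Matrix (Fin n) (Fin n) R) (f n a))
        ((s⁻¹ : (Matrix (Fin n) (Fin n) R)ˣ) : Matrix (Fin n) (Fin n) R))

/-- `(u,v)`-admissibility of an nc set. -/
def Admissible (R : Type) [CommRing R] [Algebra R A] {m d : ℕ} (hd : d ≤ m)
    (C : ∀ n, Set (BMat A m n)) (u : Fin (m - d)) (v : Fin d) : Prop :=
  ∀ n n' (a : BMat A m n) (b : BMat A m n') (X : Matrix (Fin n) (Fin n') A),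
    a ∈ C n → b ∈ C n' →
    ∃ r : Rˣ, ins hd u v a b ((r : R) • X) ∈ C (n + n')

/-- The similarity-invariant envelope of an nc set. -/
def envC (R : Type) [CommRing R] [Algebra R A] {m d : ℕ} (hd : d ≤ m)
    (C : ∀ n, Set (BMat A m n)) : ∀ n, Set (BMat A m n) :=
  fun n => {x | ∃ (s : (Matrix (Fin n) (Fin n) R)ˣ) (a : BMat A m n),
    a ∈ C n ∧ grel m d n hd x (simAct (s : Matrix (Fin n) (Fin n) R) a)}

end NC

section Res

variable {R : Type} [CommRing R] {A : Type} [Ring A] [Algebra R A]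

/-- Entrywise inclusion `M_m(M_n(B)) → M_m(M_n(A))` for a subalgebra `B ⊆ A`. -/
def bmap (D : Subalgebra R A) {m n : ℕ} (b : BMat (↥D) m n) : BMat A m n :=
  Matrix.of fun i j => (b i j).map (fun x => (x : A))

/-- Entrywise inclusion for rectangular matrices over a subalgebra. -/
def rcmap (D : Subalgebra R A) {n n' : ℕ} (X : Matrix (Fin n) (Fin n') ↥D) :
    Matrix (Fin n) (Fin n') A :=
  X.map (fun x => (x : A))

/-- `X` is invertible in `M_m(M_n(B))` for the subalgebra `B = D ⊆ A`. -/
def invIn (D : Subalgebra R A) {m n : ℕ} (X : BMat A m n) : Prop :=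
  (∀ i j k l, X i j k l ∈ D) ∧
  ∃ Y : BMat A m n, (∀ i j k l, Y i j k l ∈ D) ∧ X * Y = 1 ∧ Y * X = 1

/-- The amplification `a^{⊕̃ n}` of an element `a ∈ M_m(A) = M_m(M_1(A))`. -/
def ampl {m : ℕ} (a : BMat A m 1) (n : ℕ) : BMat A m n :=
  Matrix.of fun i j => Matrix.diagonal (fun _ => a i j 0 0)

/-- The matrix `r^{(d;m)}(P;Q)`: first `m-d` block columns are the last `m-d` block
columns of `P`, last `d` block columns are the last `d` block columns of `Q`. -/
def rmat {m d n : ℕ} (hd : d ≤ m) (P Q : BMat A m n) : BMat A m n :=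
  Matrix.of fun i j =>
    if h : (j : ℕ) < m - d then P i ⟨d + (j : ℕ), by omega⟩ else Q i j

/-- The value `[B_{v,m-d+1},…,B_{v,m}] ⋅ ζ_u` of the `(d;m)`-Grassmannian resolvent,
where `ζ_u` is the `u`-th bottom block column of the inverse `Rinv` of an `r`-matrix. -/
def resVal {m d n : ℕ} (hd : d ≤ m) (v : Fin d) (u : Fin (m - d))
    (Bm Rinv : BMat A m n) : Mat A n :=
  ∑ j : Fin d,
    Bm ⟨(v : ℕ), lt_of_lt_of_le v.isLt hd⟩ ⟨m - d + (j : ℕ), by have := j.isLt; omega⟩ *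
    Rinv ⟨m - d + (j : ℕ), by have := j.isLt; omega⟩ ⟨d + (u : ℕ), by have := u.isLt; omega⟩

/-- Membership in the `(d;m)`-Grassmannian `B`-resolvent set of `π` (represented by `p`):
`b` represents an element of `Gr^{(d;m)}_n(B)` such that `π^{⊕n}` and `b` are
transversal in `A`. -/
def ResMem {m d : ℕ} (hd : d ≤ m) (p : BMat A m 1) (D : Subalgebra R A) {n : ℕ}
    (b : BMat (↥D) m n) : Prop :=
  IsUnit b ∧ IsUnit (rmat hd (ampl p n) (bmap D b))

end Res


section Aux2
variable {R : Type} [CommRing R] {A : Type} [Ring A] [Algebra R A]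

lemma rdx_mul {p q : ℕ} {α : Type*} [NonUnitalNonAssocSemiring α]
    (M N : Matrix (Fin p ⊕ Fin q) (Fin p ⊕ Fin q) α) :
    (Matrix.reindex finSumFinEquiv finSumFinEquiv M) * (Matrix.reindex finSumFinEquiv finSumFinEquiv N)
      = Matrix.reindex finSumFinEquiv finSumFinEquiv (M * N) := by
  simp only [Matrix.reindex_apply]
  exact Matrix.submatrix_mul_equiv M N _ finSumFinEquiv.symm _

lemma rdx_add {p q : ℕ} {α : Type*} [AddCommMonoid α]
    (M N : Matrix (Fin p ⊕ Fin q) (Fin p ⊕ Fin q) α) :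
    (Matrix.reindex finSumFinEquiv finSumFinEquiv M) + (Matrix.reindex finSumFinEquiv finSumFinEquiv N)
      = Matrix.reindex finSumFinEquiv finSumFinEquiv (M + N) := by
  simp [Matrix.reindex_apply, Matrix.submatrix_add]

lemma rdx_one {p q : ℕ} {α : Type*} [Zero α] [One α] :
    (Matrix.reindex finSumFinEquiv finSumFinEquiv (1 : Matrix (Fin p ⊕ Fin q) (Fin p ⊕ Fin q) α)) = 1 := by
  simp only [Matrix.reindex_apply, Matrix.submatrix_one_equiv]

/-- entry formula for `ins` as a single reindexed block matrix. -/
lemma ins_apply {m d n n' : ℕ} (hd : d ≤ m) (u : Fin (m - d)) (v : Fin d)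
    (a : BMat A m n) (b : BMat A m n') (X : Matrix (Fin n) (Fin n') A) (i j : Fin m) :
    ins hd u v a b X i j =
      Matrix.reindex finSumFinEquiv finSumFinEquiv
        (Matrix.fromBlocks (a i j)
          (if (i : ℕ) = d + (u : ℕ) ∧ m - d ≤ (j : ℕ) then
            X * b ⟨(v : ℕ), lt_of_lt_of_le v.isLt hd⟩ j else 0) 0 (b i j)) := by
  have h1 : ins hd u v a b X i j = dsumMat (a i j) (b i j) +
      (if (i : ℕ) = d + (u : ℕ) ∧ m - d ≤ (j : ℕ) then
        cornerMat (X * b ⟨(v : ℕ), lt_of_lt_of_le v.isLt hd⟩ j) else 0) := rfl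
  rw [h1, dsumMat]
  rw [show (if (i : ℕ) = d + (u : ℕ) ∧ m - d ≤ (j : ℕ) then
        cornerMat (X * b ⟨(v : ℕ), lt_of_lt_of_le v.isLt hd⟩ j) else 0)
      = Matrix.reindex finSumFinEquiv finSumFinEquiv
        (Matrix.fromBlocks 0 (if (i : ℕ) = d + (u : ℕ) ∧ m - d ≤ (j : ℕ) then
            X * b ⟨(v : ℕ), lt_of_lt_of_le v.isLt hd⟩ j else 0) 0 0) from by
    split <;> simp [cornerMat]]
  rw [rdx_add, Matrix.fromBlocks_add]
  simp

lemma key_comm {m d n n' : ℕ} (hd : d ≤ m) (u : Fin (m - d)) (v : Fin d)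
    (a : BMat A m n) (b : BMat A m n') (X : Matrix (Fin n) (Fin n') A) (r : R) (i j : Fin m) :
    (Matrix.reindex finSumFinEquiv finSumFinEquiv
        (Matrix.fromBlocks (r • (1 : Mat A n)) 0 0 (1 : Mat A n'))) * ins hd u v a b X i j
      = ins hd u v a b (r • X) i j *
        (Matrix.reindex finSumFinEquiv finSumFinEquiv
          (Matrix.fromBlocks (r • (1 : Mat A n)) 0 0 (1 : Mat A n'))) := by
  rw [ins_apply, ins_apply, rdx_mul, rdx_mul, Matrix.fromBlocks_multiply,
    Matrix.fromBlocks_multiply]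
  congr 1
  simp [Matrix.smul_mul, Matrix.mul_smul, smul_ite]

lemma rmulR_rmulR {W : Type} [AddCommMonoid W] [Module R W] {p q s t : ℕ}
    (M : Matrix (Fin p) (Fin q) W) (P : Matrix (Fin q) (Fin s) R) (Q : Matrix (Fin s) (Fin t) R) :
    rmulR (rmulR M P) Q = rmulR M (P * Q) := by
  ext i j
  show ∑ k, Q k j • (∑ l, P l k • M i l) = ∑ l, (P * Q) l j • M i l
  simp only [Finset.smul_sum, smul_smul, Matrix.mul_apply, Finset.sum_smul]
  rw [Finset.sum_comm]
  exact Finset.sum_congr rfl fun l _ => Finset.sum_congr rfl fun k _ => by rw [mul_comm]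

lemma rmulR_one {W : Type} [AddCommMonoid W] [Module R W] {p q : ℕ}
    (M : Matrix (Fin p) (Fin q) W) : rmulR M (1 : Matrix (Fin q) (Fin q) R) = M := by
  ext i j
  show ∑ k, (1 : Matrix (Fin q) (Fin q) R) k j • M i k = M i j
  simp [Matrix.one_apply, ite_smul]

lemma sum_finSum {p q : ℕ} {β : Type*} [AddCommMonoid β] (g : Fin (p + q) → β) :
    ∑ k, g k = (∑ k : Fin p, g (finSumFinEquiv (Sum.inl k))) +
      ∑ k : Fin q, g (finSumFinEquiv (Sum.inr k)) := by
  rw [← Equiv.sum_comp finSumFinEquiv g, Fintype.sum_sum_type]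

lemma isUnit_diag {k p : ℕ} (P Q : Mat A p) (h1 : P * Q = 1) (h2 : Q * P = 1) :
    IsUnit (Matrix.diagonal (fun _ : Fin k => P)) := by
  have e1 : Matrix.diagonal (fun _ : Fin k => P) * Matrix.diagonal (fun _ => Q) = 1 := by
    rw [Matrix.diagonal_mul_diagonal]; simp [h1]
  have e2 : Matrix.diagonal (fun _ : Fin k => Q) * Matrix.diagonal (fun _ => P) = 1 := by
    rw [Matrix.diagonal_mul_diagonal]; simp [h2]
  exact ⟨⟨_, _, e1, e2⟩, rfl⟩

end Aux2

/-- homogeneity of the nc difference-differential operator. -/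
theorem diff_value_homogeneous {R : Type} [CommRing R] {A : Type} [Ring A] [Algebra R A]
    {W : Type} [AddCommMonoid W] [Module R W]
    (m d : ℕ) (hd1 : 1 ≤ d) (hd : d ≤ m)
    (C : ∀ n, Set (BMat A m n)) (hC : IsNCSetCarrier hd C)
    (f : ∀ n, BMat A m n → Matrix (Fin n) (Fin n) W) (hf : IsNCFun R hd C f)
    (u : Fin (m - d)) (v : Fin d) {n n' : ℕ}
    (a : BMat A m n) (ha : a ∈ C n) (b : BMat A m n') (hb : b ∈ C n')
    (X : Matrix (Fin n) (Fin n') A) (r : R)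
    (hmem : ins hd u v a b X ∈ C (n + n'))
    (hmem' : ins hd u v a b (r • X) ∈ C (n + n'))
    (H H' : Matrix (Fin n) (Fin n') W)
    (hH : f (n + n') (ins hd u v a b X) = triW (f n a) H (f n' b))
    (hH' : f (n + n') (ins hd u v a b (r • X)) = triW (f n a) H' (f n' b)) :
    H' = r • H := by
  classical
  set φ := algebraMap R A with hφ
  set T : Matrix (Fin (n + n')) (Fin (n + n')) R :=
    Matrix.reindex finSumFinEquiv finSumFinEquiv
      (Matrix.fromBlocks (r • (1 : Matrix (Fin n) (Fin n) R)) 0 0 1) with hT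
  set Ta : Mat A (n + n') :=
    Matrix.reindex finSumFinEquiv finSumFinEquiv
      (Matrix.fromBlocks (r • (1 : Mat A n)) 0 0 (1 : Mat A n')) with hTa
  have hTmap : T.map φ = Ta := by
    rw [hT, hTa, Matrix.reindex_apply, Matrix.reindex_apply, ← Matrix.submatrix_map,
      Matrix.fromBlocks_map]
    have b11 : ((r • (1 : Matrix (Fin n) (Fin n) R)).map φ) = r • (1 : Mat A n) := by
      ext k l
      simp [Matrix.map_apply, Matrix.one_apply, Algebra.smul_def, Matrix.algebraMap_matrix_apply, apply_ite φ]
      rfl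
    rw [b11, Matrix.map_zero φ (map_zero φ), Matrix.map_zero φ (map_zero φ), Matrix.map_one φ (map_zero φ) (map_one φ)]
  have mulU : ∀ T₁ T₂ : Matrix (Fin (n + n')) (Fin (n + n')) R,
      uptri R T₁ * uptri R T₂ = uptri R (T₁ + T₂) := by
    intro T₁ T₂
    rw [uptri, uptri, uptri, rdx_mul, Matrix.fromBlocks_multiply]
    congr 1 <;> simp [add_comm]
  have hU0 : uptri R (0 : Matrix (Fin (n + n')) (Fin (n + n')) R) = 1 := by
    rw [uptri, Matrix.fromBlocks_one, rdx_one]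
  have hS1 : uptri R T * uptri R (-T) = 1 := by rw [mulU]; simp [hU0]
  have hS2 : uptri R (-T) * uptri R T = 1 := by rw [mulU]; simp [hU0]
  set Su : (Matrix (Fin ((n + n') + (n + n'))) (Fin ((n + n') + (n + n'))) R)ˣ :=
    ⟨uptri R T, uptri R (-T), hS1, hS2⟩ with hSu
  have hSuval : (↑Su : Matrix (Fin ((n + n') + (n + n'))) (Fin ((n + n') + (n + n'))) R)
      = uptri R T := rfl
  set Sa : Mat A ((n + n') + (n + n')) := (uptri R T).map φ with hSaDef
  have hSa : Sa = Matrix.reindex finSumFinEquiv finSumFinEquiv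
      (Matrix.fromBlocks 1 Ta 0 1) := by
    rw [hSaDef, uptri, Matrix.reindex_apply, ← Matrix.submatrix_map, Matrix.fromBlocks_map,
      Matrix.map_one φ (map_zero φ) (map_one φ), Matrix.map_zero φ (map_zero φ), hTmap,
      ← Matrix.reindex_apply]
  set Zr := ins hd u v a b (r • X) with hZr
  set Zx := ins hd u v a b X with hZx
  set Y : BMat A m ((n + n') + (n + n')) := dsum Zr Zx with hY
  have hYC : Y ∈ C ((n + n') + (n + n')) := hC.2.2 _ _ _ hmem' _ hmem
  have hcomm : ∀ i j : Fin m, Sa * Y i j = Y i j * Sa := by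
    intro i j
    have hYij : Y i j = Matrix.reindex finSumFinEquiv finSumFinEquiv
        (Matrix.fromBlocks (Zr i j) 0 0 (Zx i j)) := rfl
    rw [hYij, hSa, rdx_mul, rdx_mul, Matrix.fromBlocks_multiply, Matrix.fromBlocks_multiply]
    congr 1
    simp only [Matrix.one_mul, Matrix.mul_one, Matrix.zero_mul, Matrix.mul_zero,
      add_zero, zero_add]
    rw [hTa, hZx, hZr, key_comm hd u v a b X r i j]
  set Γ : BMat A m ((n + n') + (n + n')) := Matrix.diagonal (fun _ => Sa) with hΓ
  have hSaU1 : Sa * (uptri R (-T)).map φ = 1 := by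
    rw [hSaDef, ← Matrix.map_mul, hS1, Matrix.map_one φ (map_zero φ) (map_one φ)]
  have hSaU2 : (uptri R (-T)).map φ * Sa = 1 := by
    rw [hSaDef, ← Matrix.map_mul, hS2, Matrix.map_one φ (map_zero φ) (map_one φ)]
  have hΓH : memH m d ((n + n') + (n + n')) hd Γ := by
    refine ⟨isUnit_diag _ _ hSaU1 hSaU2, ?_, ?_, ?_⟩
    · intro i j hi hj
      rw [hΓ]
      exact Matrix.diagonal_apply_ne _ (Fin.ne_of_val_ne (by omega))
    · have hcor : (Matrix.of fun i j : Fin (m - d) =>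
          Γ ⟨(i : ℕ), lt_of_lt_of_le i.isLt (Nat.sub_le m d)⟩
            ⟨(j : ℕ), lt_of_lt_of_le j.isLt (Nat.sub_le m d)⟩)
          = Matrix.diagonal (fun _ : Fin (m - d) => Sa) := by
        ext i j
        simp [hΓ, Matrix.diagonal_apply, Fin.ext_iff]
      rw [hcor]
      exact isUnit_diag _ _ hSaU1 hSaU2
    · have hcor : (Matrix.of fun i j : Fin d =>
          Γ ⟨m - d + (i : ℕ), by have := i.isLt; omega⟩
            ⟨m - d + (j : ℕ), by have := j.isLt; omega⟩)
          = Matrix.diagonal (fun _ : Fin d => Sa) := by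
        ext i j
        simp [hΓ, Matrix.diagonal_apply, Fin.ext_iff]
      rw [hcor]
      exact isUnit_diag _ _ hSaU1 hSaU2
  have hsim : simAct (↑Su : Matrix (Fin ((n + n') + (n + n'))) (Fin ((n + n') + (n + n'))) R) Y
      = Y * Γ := by
    refine Matrix.ext fun i j => ?_
    show (uptri R T).map φ * Y i j = (Y * Γ) i j
    rw [hΓ, Matrix.mul_diagonal, ← hSaDef]
    exact hcomm i j
  have hgrel : grel m d ((n + n') + (n + n')) hd
      (simAct (↑Su : Matrix (Fin ((n + n') + (n + n'))) (Fin ((n + n') + (n + n'))) R) Y) Y :=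
    ⟨Γ, hΓH, hsim⟩
  have hin : simAct (↑Su : Matrix (Fin ((n + n') + (n + n'))) (Fin ((n + n') + (n + n'))) R) Y
      ∈ C ((n + n') + (n + n')) := (hC.2.1 _ _ _ hgrel).mpr hYC
  have h1 : f _ (simAct (↑Su : Matrix (Fin ((n + n') + (n + n'))) (Fin ((n + n') + (n + n'))) R) Y)
      = f _ Y := hf.1 _ _ hin _ hYC hgrel
  have h2 := hf.2.2 _ Su Y hYC hin
  rw [h1] at h2
  have keyEq : rmulL (↑Su : Matrix (Fin ((n + n') + (n + n'))) (Fin ((n + n') + (n + n'))) R)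
      (f _ Y) = rmulR (f _ Y) (↑Su : Matrix _ _ R) := by
    have h3 := congrArg (fun M => rmulR M
      (↑Su : Matrix (Fin ((n + n') + (n + n'))) (Fin ((n + n') + (n + n'))) R)) h2
    rw [rmulR_rmulR, Units.inv_mul, rmulR_one] at h3
    exact h3.symm
  have hfY : f _ Y = dsumW (f _ Zr) (f _ Zx) := hf.2.1 _ _ _ hmem' _ hmem
  rw [hH, hH'] at hfY
  ext i j
  have hE := congrArg (fun M => M (finSumFinEquiv (Sum.inl (finSumFinEquiv (Sum.inl i))))
      (finSumFinEquiv (Sum.inr (finSumFinEquiv (Sum.inr j))))) keyEq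
  have L : rmulL (↑Su : Matrix (Fin ((n + n') + (n + n'))) (Fin ((n + n') + (n + n'))) R)
      (f _ Y) (finSumFinEquiv (Sum.inl (finSumFinEquiv (Sum.inl i))))
      (finSumFinEquiv (Sum.inr (finSumFinEquiv (Sum.inr j)))) = r • H i j := by
    show (∑ k, (↑Su : Matrix (Fin ((n + n') + (n + n'))) (Fin ((n + n') + (n + n'))) R)
        (finSumFinEquiv (Sum.inl (finSumFinEquiv (Sum.inl i)))) k •
        (f _ Y) k (finSumFinEquiv (Sum.inr (finSumFinEquiv (Sum.inr j))))) = r • H i j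
    rw [hfY, sum_finSum]
    simp only [hSuval, uptri, dsumW, triW, hT, Matrix.reindex_apply, Matrix.submatrix_apply,
      Equiv.symm_apply_apply, Matrix.fromBlocks_apply₁₁, Matrix.fromBlocks_apply₁₂,
      Matrix.fromBlocks_apply₂₁, Matrix.fromBlocks_apply₂₂, Matrix.zero_apply, smul_zero,
      Finset.sum_const_zero, zero_add, add_zero]
    rw [sum_finSum]
    simp [Matrix.smul_apply, Matrix.one_apply, Matrix.zero_apply, smul_eq_mul, mul_ite,
      mul_one, mul_zero, ite_smul, zero_smul, Finset.sum_ite_eq, Matrix.fromBlocks_apply₁₂]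
  have Rr : rmulR (f _ Y) (↑Su : Matrix (Fin ((n + n') + (n + n'))) (Fin ((n + n') + (n + n'))) R)
      (finSumFinEquiv (Sum.inl (finSumFinEquiv (Sum.inl i))))
      (finSumFinEquiv (Sum.inr (finSumFinEquiv (Sum.inr j)))) = H' i j := by
    show (∑ k, (↑Su : Matrix (Fin ((n + n') + (n + n'))) (Fin ((n + n') + (n + n'))) R) k
        (finSumFinEquiv (Sum.inr (finSumFinEquiv (Sum.inr j)))) •
        (f _ Y) (finSumFinEquiv (Sum.inl (finSumFinEquiv (Sum.inl i)))) k) = H' i j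
    rw [hfY, sum_finSum]
    simp only [hSuval, uptri, dsumW, triW, hT, Matrix.reindex_apply, Matrix.submatrix_apply,
      Equiv.symm_apply_apply, Matrix.fromBlocks_apply₁₁, Matrix.fromBlocks_apply₁₂,
      Matrix.fromBlocks_apply₂₁, Matrix.fromBlocks_apply₂₂, Matrix.zero_apply, smul_zero,
      Finset.sum_const_zero, zero_add, add_zero]
    rw [sum_finSum]
    simp [Matrix.smul_apply, Matrix.one_apply, Matrix.zero_apply, smul_eq_mul, mul_ite,
      mul_one, mul_zero, ite_smul, zero_smul, one_smul, Finset.sum_ite_eq, Finset.sum_ite_eq']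
  rw [L, Rr] at hE
  rw [Matrix.smul_apply]
  exact hE.symm
end

section
/- Additivity of the nc difference-differential operator: Let Ω be a (u,v)-admissible nc set over Gr^{(d;m)}(A) and f : Ω → M(B) an nc function. Then for all σ ∈ Ω_n, σ' ∈ Ω_{n'} and X, Y ∈ M_{n,n'}(A), (Δ̃^{(d;m)}_{u,v} f)(σ;σ')(X+Y) = (Δ̃^{(d;m)}_{u,v} f)(σ;σ')(X) + (Δ̃^{(d;m)}_{u,v} f)(σ;σ')(Y). -/
open Matrix

section AddHelpers

open Matrix

variable {R : Type} [CommRing R] {A : Type} [Ring A] [Algebra R A]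

namespace DiffAdd

lemma submatrix_mul_left {α : Type} [NonUnitalNonAssocSemiring α] {l l' o p : Type}
    [Fintype o] (e : l' → l) (M : Matrix l o α) (K : Matrix o p α) :
    M.submatrix e id * K = (M * K).submatrix e id := by
  ext x y; simp [Matrix.mul_apply]

lemma submatrix_mul_right {α : Type} [NonUnitalNonAssocSemiring α] {l o p p' : Type}
    [Fintype o] (e : p' → p) (M : Matrix l o α) (K : Matrix o p α) :
    M * K.submatrix id e = (M * K).submatrix id e := by
  ext x y; simp [Matrix.mul_apply]

lemma submatrix_mul_both {α : Type} [NonUnitalNonAssocSemiring α] {l l' o p p' : Type}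
    [Fintype o] (e₁ : l' → l) (e₂ : p' → p) (M : Matrix l o α) (K : Matrix o p α) :
    M.submatrix e₁ id * K.submatrix id e₂ = (M * K).submatrix e₁ e₂ := by
  ext x y; simp [Matrix.mul_apply]

lemma submatrix_add' {α : Type} [Add α] {m n l o : Type} (f : l → m) (g : o → n)
    (A B : Matrix m n α) :
    A.submatrix f g + B.submatrix f g = (A + B).submatrix f g := rfl

lemma map_fromRows {α β : Type} {m₁ m₂ n : Type} (φ : α → β)
    (P : Matrix m₁ n α) (Q : Matrix m₂ n α) :
    (Matrix.fromRows P Q).map φ = Matrix.fromRows (P.map φ) (Q.map φ) := by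
  ext (x | x) y <;> rfl

lemma map_fromColumns {α β : Type} {m n₁ n₂ : Type} (φ : α → β)
    (P : Matrix m n₁ α) (Q : Matrix m n₂ α) :
    (Matrix.fromCols P Q).map φ = Matrix.fromCols (P.map φ) (Q.map φ) := by
  ext x (y | y) <;> rfl

lemma smul_fromRows {S α : Type} [SMul S α] {m₁ m₂ n : Type} (r : S)
    (P : Matrix m₁ n α) (Q : Matrix m₂ n α) :
    r • Matrix.fromRows P Q = Matrix.fromRows (r • P) (r • Q) := by
  ext (x | x) y <;> rfl

lemma map_algebraMap_smul {m n : Type} (r : R) (M : Matrix m n R) :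
    ((r • M).map (algebraMap R A)) = r • (M.map (algebraMap R A)) := by
  ext x y
  simp only [Matrix.map_apply, Matrix.smul_apply, smul_eq_mul, Algebra.smul_def]
  exact (algebraMap R A).map_mul _ _

/-- `vcat` as a submatrix of `fromRows`. -/
lemma vcat_eq {α : Type} {p p' q : ℕ} (P : Matrix (Fin p) (Fin q) α)
    (Q : Matrix (Fin p') (Fin q) α) :
    vcat P Q = (Matrix.fromRows P Q).submatrix
      (⇑(finSumFinEquiv.symm : Fin (p + p') ≃ Fin p ⊕ Fin p')) id := by
  ext i j
  rw [Matrix.submatrix_apply]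
  rcases h : ((finSumFinEquiv.symm : Fin (p + p') ≃ Fin p ⊕ Fin p') i) with x | x
  · have h2 := congrArg (finSumFinEquiv : Fin p ⊕ Fin p' ≃ Fin (p + p')) h
    rw [Equiv.apply_symm_apply] at h2
    have hi : (i : ℕ) = (x : ℕ) := by rw [h2]; simp
    have hx : (i : ℕ) < p := by rw [hi]; exact x.isLt
    simp only [vcat, Matrix.of_apply, h]
    rw [dif_pos hx, Matrix.fromRows_apply_inl]
    congr 1
    exact Fin.ext hi
  · have h2 := congrArg (finSumFinEquiv : Fin p ⊕ Fin p' ≃ Fin (p + p')) h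
    rw [Equiv.apply_symm_apply] at h2
    have hi : (i : ℕ) = p + (x : ℕ) := by rw [h2]; simp
    have hx : ¬ (i : ℕ) < p := by omega
    simp only [vcat, Matrix.of_apply, h]
    rw [dif_neg hx, Matrix.fromRows_apply_inr]
    congr 1
    refine Fin.ext ?_
    show (i : ℕ) - p = (x : ℕ)
    omega

lemma vcat_mul {p p' q s : ℕ} (P : Matrix (Fin p) (Fin q) A)
    (Q : Matrix (Fin p') (Fin q) A) (M : Matrix (Fin q) (Fin s) A) :
    vcat P Q * M = vcat (P * M) (Q * M) := by
  rw [vcat_eq, vcat_eq, submatrix_mul_left, Matrix.fromRows_mul]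

/-- entry structure of `ins`. -/
lemma ins_apply {m d n₁ n₂ : ℕ} (hd : d ≤ m) (u : Fin (m - d)) (v : Fin d)
    (P : BMat A m n₁) (Q : BMat A m n₂) (Z : Matrix (Fin n₁) (Fin n₂) A) (i j : Fin m) :
    ins hd u v P Q Z i j =
      (Matrix.fromBlocks (P i j)
        (if (i : ℕ) = d + (u : ℕ) ∧ m - d ≤ (j : ℕ) then
          Z * Q ⟨(v : ℕ), lt_of_lt_of_le v.isLt hd⟩ j else 0)
        0 (Q i j)).submatrix (⇑finSumFinEquiv.symm) (⇑finSumFinEquiv.symm) := by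
  have h1 : ins hd u v P Q Z i j = dsumMat (P i j) (Q i j) +
      (if (i : ℕ) = d + (u : ℕ) ∧ m - d ≤ (j : ℕ) then
        cornerMat (Z * Q ⟨(v : ℕ), lt_of_lt_of_le v.isLt hd⟩ j) else 0) := rfl
  rw [h1]
  by_cases hij : (i : ℕ) = d + (u : ℕ) ∧ m - d ≤ (j : ℕ)
  · rw [if_pos hij, if_pos hij]
    ext x y
    simp only [dsumMat, cornerMat, Matrix.reindex_apply, Matrix.submatrix_apply,
      Matrix.add_apply]
    rcases finSumFinEquiv.symm x with x' | x' <;> rcases finSumFinEquiv.symm y with y' | y' <;>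
      simp
  · rw [if_neg hij, if_neg hij, add_zero]
    rfl

lemma rmulR_rmulR {W : Type} [AddCommMonoid W] [Module R W] {p q r s : ℕ}
    (X : Matrix (Fin p) (Fin q) W) (u : Matrix (Fin q) (Fin r) R)
    (w : Matrix (Fin r) (Fin s) R) :
    rmulR (R := R) (rmulR X u) w = rmulR X (u * w) := by
  ext i j
  simp only [rmulR, Matrix.of_apply, Matrix.mul_apply, Finset.smul_sum, Finset.sum_smul,
    smul_smul]
  rw [Finset.sum_comm]
  refine Finset.sum_congr rfl fun k _ => Finset.sum_congr rfl fun l _ => ?_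
  rw [mul_comm]

lemma rmulR_one {W : Type} [AddCommMonoid W] [Module R W] {p q : ℕ}
    (X : Matrix (Fin p) (Fin q) W) :
    rmulR X (1 : Matrix (Fin q) (Fin q) R) = X := by
  ext i j
  simp [rmulR, Matrix.one_apply, ite_smul]

lemma isUnit_diagonal_const {q p : ℕ} {g : Mat A q} (hg : IsUnit g) :
    IsUnit (Matrix.diagonal (fun _ : Fin p => g)) := by
  obtain ⟨gu, rfl⟩ := hg
  have e1 : (fun _ : Fin p => Units.val gu * Units.val gu⁻¹) = fun _ : Fin p => (1 : Mat A q) := by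
    funext _; exact Units.mul_inv gu
  have e2 : (fun _ : Fin p => Units.val gu⁻¹ * Units.val gu) = fun _ : Fin p => (1 : Mat A q) := by
    funext _; exact Units.inv_mul gu
  have h1 : Matrix.diagonal (fun _ : Fin p => Units.val gu) *
      Matrix.diagonal (fun _ : Fin p => Units.val gu⁻¹) = 1 := by
    rw [Matrix.diagonal_mul_diagonal, e1, Matrix.diagonal_one]
  have h2 : Matrix.diagonal (fun _ : Fin p => Units.val gu⁻¹) *
      Matrix.diagonal (fun _ : Fin p => Units.val gu) = 1 := by
    rw [Matrix.diagonal_mul_diagonal, e2, Matrix.diagonal_one]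
  exact ⟨⟨_, _, h1, h2⟩, rfl⟩

lemma memH_diagonal_const {m d q : ℕ} (hd : d ≤ m) {g : Mat A q} (hg : IsUnit g) :
    memH m d q hd (Matrix.diagonal (fun _ : Fin m => g)) := by
  refine ⟨isUnit_diagonal_const hg, ?_, ?_, ?_⟩
  · intro i j hi hj
    exact Matrix.diagonal_apply_ne _ (Fin.ne_of_val_ne (by omega))
  · have h : (Matrix.of fun i j : Fin (m - d) =>
        (Matrix.diagonal (fun _ : Fin m => g))
          ⟨(i : ℕ), lt_of_lt_of_le i.isLt (Nat.sub_le m d)⟩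
          ⟨(j : ℕ), lt_of_lt_of_le j.isLt (Nat.sub_le m d)⟩)
        = Matrix.diagonal (fun _ : Fin (m - d) => g) := by
      ext i j
      simp only [Matrix.of_apply, Matrix.diagonal_apply, Fin.mk.injEq, Fin.val_inj]
    rw [h]
    exact isUnit_diagonal_const hg
  · have h : (Matrix.of fun i j : Fin d =>
        (Matrix.diagonal (fun _ : Fin m => g))
          ⟨m - d + (i : ℕ), by have := i.isLt; omega⟩
          ⟨m - d + (j : ℕ), by have := j.isLt; omega⟩)
        = Matrix.diagonal (fun _ : Fin d => g) := by
      ext i j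
      simp only [Matrix.of_apply, Matrix.diagonal_apply, Fin.mk.injEq, add_right_inj,
        Fin.val_inj]
    rw [h]
    exact isUnit_diagonal_const hg

/-- The key intertwining lemma: if `S` (scalar over `R`) intertwines `p` and `q`
entrywise, then it intertwines the values `f p` and `f q`. -/
lemma key {W : Type} [AddCommMonoid W] [Module R W] {m d : ℕ} (hd : d ≤ m)
    (C : ∀ k, Set (BMat A m k)) (hC : IsNCSetCarrier hd C)
    (f : ∀ k, BMat A m k → Matrix (Fin k) (Fin k) W) (hf : IsNCFun R hd C f)
    {N T : ℕ} (p : BMat A m N) (hp : p ∈ C N) (q : BMat A m T) (hq : q ∈ C T)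
    (S : Matrix (Fin T) (Fin N) R)
    (hint : ∀ i j, q i j * S.map (algebraMap R A) = S.map (algebraMap R A) * p i j) :
    rmulL S (f N p) = rmulR (f T q) S := by
  classical
  set eNT : Fin N ⊕ Fin T ≃ Fin (N + T) := finSumFinEquiv with heNT
  set s : Matrix (Fin (N + T)) (Fin (N + T)) R :=
    (Matrix.fromBlocks 1 0 S 1).submatrix ⇑eNT.symm ⇑eNT.symm with hs
  set s' : Matrix (Fin (N + T)) (Fin (N + T)) R :=
    (Matrix.fromBlocks 1 0 (-S) 1).submatrix ⇑eNT.symm ⇑eNT.symm with hs'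
  have hmul : s * s' = 1 := by
    rw [hs, hs', Matrix.submatrix_mul_equiv, Matrix.fromBlocks_multiply]
    simp only [Matrix.one_mul, Matrix.mul_one, Matrix.zero_mul, Matrix.mul_zero,
      add_zero, zero_add]
    rw [add_neg_cancel, Matrix.fromBlocks_one, Matrix.submatrix_one_equiv]
  have hmul' : s' * s = 1 := by
    rw [hs, hs', Matrix.submatrix_mul_equiv, Matrix.fromBlocks_multiply]
    simp only [Matrix.one_mul, Matrix.mul_one, Matrix.zero_mul, Matrix.mul_zero,
      add_zero, zero_add]
    rw [neg_add_cancel, Matrix.fromBlocks_one, Matrix.submatrix_one_equiv]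
  set sU : (Matrix (Fin (N + T)) (Fin (N + T)) R)ˣ := ⟨s, s', hmul, hmul'⟩ with hsU
  have hsA : s.map (algebraMap R A) =
      (Matrix.fromBlocks 1 0 (S.map (algebraMap R A)) 1).submatrix ⇑eNT.symm ⇑eNT.symm := by
    rw [hs, ← Matrix.submatrix_map]
    refine congrArg (fun M : Matrix (Fin N ⊕ Fin T) (Fin N ⊕ Fin T) A =>
      M.submatrix (⇑eNT.symm) (⇑eNT.symm)) ?_
    ext (x | x) (y | y) <;>
      simp [Matrix.map_apply, Matrix.one_apply, apply_ite (algebraMap R A)]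
  set D : BMat A m (N + T) := dsum p q with hD
  have hDC : D ∈ C (N + T) := hC.2.2 N T p hp q hq
  have hDij : ∀ i j, D i j =
      (Matrix.fromBlocks (p i j) 0 0 (q i j)).submatrix ⇑eNT.symm ⇑eNT.symm := fun i j => rfl
  have hcomm : ∀ i j, s.map (algebraMap R A) * D i j = D i j * s.map (algebraMap R A) := by
    intro i j
    rw [hsA, hDij, Matrix.submatrix_mul_equiv, Matrix.submatrix_mul_equiv,
      Matrix.fromBlocks_multiply, Matrix.fromBlocks_multiply]
    simp only [Matrix.one_mul, Matrix.mul_one, Matrix.zero_mul, Matrix.mul_zero,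
      add_zero, zero_add]
    rw [hint i j]
  have hsAunit : IsUnit (s.map (algebraMap R A)) := by
    have := (Units.map (RingHom.mapMatrix (algebraMap R A)).toMonoidHom sU).isUnit
    simpa using this
  set Γ : BMat A m (N + T) := Matrix.diagonal (fun _ => s.map (algebraMap R A)) with hΓ
  have hgrel : grel m d (N + T) hd (simAct s D) D := by
    refine ⟨Γ, memH_diagonal_const hd hsAunit, ?_⟩
    refine Matrix.ext fun i j => ?_
    show s.map (algebraMap R A) * D i j = (D * Γ) i j
    rw [hΓ, Matrix.mul_diagonal]
    exact hcomm i j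
  have hsD : simAct s D ∈ C (N + T) := (hC.2.1 _ _ _ hgrel).mpr hDC
  have hfs : f _ (simAct s D) = f _ D := hf.1 _ _ hsD _ hDC hgrel
  have hax : f (N + T) (simAct s D) = rmulR (rmulL s (f (N + T) D)) s' :=
    hf.2.2 (N + T) sU D hDC hsD
  have hmain : rmulL s (f (N + T) D) = rmulR (f (N + T) D) s := by
    have h1 : f (N + T) D = rmulR (rmulL s (f (N + T) D)) s' := hfs.symm.trans hax
    calc rmulL s (f (N + T) D)
        = rmulR (rmulR (rmulL s (f (N + T) D)) s') s := by
          rw [rmulR_rmulR, hmul', rmulR_one]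
      _ = rmulR (f (N + T) D) s := by rw [← h1]
  have hKD : f (N + T) D = dsumW (f N p) (f T q) := hf.2.1 N T p hp q hq
  rw [hKD] at hmain
  ext i j
  have h := congrArg (fun M => M (eNT (Sum.inr i)) (eNT (Sum.inl j))) hmain
  simp only [rmulL, rmulR, Matrix.of_apply, hs, dsumW, Matrix.reindex_apply,
    Matrix.submatrix_apply] at h
  rw [← Equiv.sum_comp eNT, ← Equiv.sum_comp eNT] at h
  simp only [heNT, Equiv.symm_apply_apply, Fintype.sum_sum_type, Matrix.fromBlocks_apply₁₁,
    Matrix.fromBlocks_apply₁₂, Matrix.fromBlocks_apply₂₁, Matrix.fromBlocks_apply₂₂,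
    smul_zero, zero_smul, Finset.sum_const_zero, add_zero, zero_add] at h
  simpa [rmulL, rmulR] using h

end DiffAdd

end AddHelpers

/-- additivity of the nc difference-differential operator
`Δ̃^{(d;m)}_{u,v} f`, expressed through its defining property:
`(Δ̃ f)(σ;σ')(X) = r⁻¹ ⋅ H` whenever `f((σ;σ')_{u,v}(rX)) = [[f σ, H],[0, f σ']]`. -/
theorem diff_value_additive {R : Type} [CommRing R] {A : Type} [Ring A] [Algebra R A]
    {W : Type} [AddCommMonoid W] [Module R W]
    (m d : ℕ) (hd1 : 1 ≤ d) (hd : d ≤ m)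
    (C : ∀ n, Set (BMat A m n)) (hC : IsNCSetCarrier hd C)
    (u : Fin (m - d)) (v : Fin d)
    (hadm : Admissible R hd C u v)
    (f : ∀ n, BMat A m n → Matrix (Fin n) (Fin n) W) (hf : IsNCFun R hd C f)
    {n n' : ℕ} (a : BMat A m n) (ha : a ∈ C n) (b : BMat A m n') (hb : b ∈ C n')
    (X Y : Matrix (Fin n) (Fin n') A) (r₁ r₂ r₃ : Rˣ)
    (h₁ : ins hd u v a b ((r₁ : R) • X) ∈ C (n + n'))
    (h₂ : ins hd u v a b ((r₂ : R) • Y) ∈ C (n + n'))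
    (h₃ : ins hd u v a b ((r₃ : R) • (X + Y)) ∈ C (n + n'))
    (H₁ H₂ H₃ : Matrix (Fin n) (Fin n') W)
    (hH₁ : f (n + n') (ins hd u v a b ((r₁ : R) • X)) = triW (f n a) H₁ (f n' b))
    (hH₂ : f (n + n') (ins hd u v a b ((r₂ : R) • Y)) = triW (f n a) H₂ (f n' b))
    (hH₃ : f (n + n') (ins hd u v a b ((r₃ : R) • (X + Y))) = triW (f n a) H₃ (f n' b)) :
    ((r₃⁻¹ : Rˣ) : R) • H₃ = ((r₁⁻¹ : Rˣ) : R) • H₁ + ((r₂⁻¹ : Rˣ) : R) • H₂ := by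
  classical
  -- abbreviations
  set p₁ : BMat A m (n + n') := ins hd u v a b ((r₁ : R) • X) with hp₁def
  set p₂ : BMat A m (n + n') := ins hd u v a b ((r₂ : R) • Y) with hp₂def
  set p₃ : BMat A m (n + n') := ins hd u v a b ((r₃ : R) • (X + Y)) with hp₃def
  obtain ⟨ρ, hρ⟩ := hadm (n + n') n' p₁ b (vcat Y (0 : Matrix (Fin n') (Fin n') A)) h₁ hb
  set G : BMat A m (n + n' + n') := ins hd u v p₁ b ((ρ : R) • vcat Y 0) with hGdef
  set vI : Fin m := ⟨(v : ℕ), lt_of_lt_of_le v.isLt hd⟩ with hvI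
  set φ := algebraMap R A with hφ
  -- scalars
  set cR : R := (r₂ : R) * ((ρ⁻¹ : Rˣ) : R) with hcR
  set γR : R := (r₁ : R) * (ρ : R) with hγR
  set αR : R := (r₃ : R) * (ρ : R) with hαR
  set βR : R := (r₃ : R) * (r₁ : R) with hβR
  -- block structure of the base points
  have ha1 : ∀ i j, p₁ i j = (Matrix.fromBlocks (a i j)
      (if (i : ℕ) = d + (u : ℕ) ∧ m - d ≤ (j : ℕ) then ((r₁ : R) • X) * b vI j else 0)
      0 (b i j)).submatrix (⇑finSumFinEquiv.symm) (⇑finSumFinEquiv.symm) :=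
    fun i j => DiffAdd.ins_apply hd u v a b _ i j
  have ha2 : ∀ i j, p₂ i j = (Matrix.fromBlocks (a i j)
      (if (i : ℕ) = d + (u : ℕ) ∧ m - d ≤ (j : ℕ) then ((r₂ : R) • Y) * b vI j else 0)
      0 (b i j)).submatrix (⇑finSumFinEquiv.symm) (⇑finSumFinEquiv.symm) :=
    fun i j => DiffAdd.ins_apply hd u v a b _ i j
  have ha3 : ∀ i j, p₃ i j = (Matrix.fromBlocks (a i j)
      (if (i : ℕ) = d + (u : ℕ) ∧ m - d ≤ (j : ℕ) then ((r₃ : R) • (X + Y)) * b vI j else 0)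
      0 (b i j)).submatrix (⇑finSumFinEquiv.symm) (⇑finSumFinEquiv.symm) :=
    fun i j => DiffAdd.ins_apply hd u v a b _ i j
  have hGij : ∀ i j, G i j = (Matrix.fromBlocks (p₁ i j)
      (if (i : ℕ) = d + (u : ℕ) ∧ m - d ≤ (j : ℕ) then ((ρ : R) • vcat Y 0) * b vI j else 0)
      0 (b i j)).submatrix (⇑finSumFinEquiv.symm) (⇑finSumFinEquiv.symm) :=
    fun i j => DiffAdd.ins_apply hd u v p₁ b _ i j
  -- corner structure
  have hcorner : ∀ j : Fin m, ((ρ : R) • vcat Y (0 : Matrix (Fin n') (Fin n') A)) * b vI j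
      = (Matrix.fromRows ((ρ : R) • (Y * b vI j)) (0 : Matrix (Fin n') (Fin n') A)).submatrix
          (⇑finSumFinEquiv.symm) id := by
    intro j
    rw [Matrix.smul_mul, DiffAdd.vcat_mul, Matrix.zero_mul, DiffAdd.vcat_eq]
    rw [show ((ρ : R) • (Matrix.fromRows (Y * b vI j)
          (0 : Matrix (Fin n') (Fin n') A)).submatrix (⇑finSumFinEquiv.symm) id)
        = (((ρ : R) • Matrix.fromRows (Y * b vI j)
          (0 : Matrix (Fin n') (Fin n') A)).submatrix (⇑finSumFinEquiv.symm) id) from rfl]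
    rw [DiffAdd.smul_fromRows, smul_zero]
  -- the stage lemma
  have stage : ∀ (J : Matrix (Fin (n + n')) (Fin (n + n')) A)
      (E : Matrix (Fin n') (Fin (n + n')) A) (pk : BMat A m (n + n')),
      (∀ i j, p₁ i j * J +
        (if (i : ℕ) = d + (u : ℕ) ∧ m - d ≤ (j : ℕ) then ((ρ : R) • vcat Y 0) * b vI j else 0)
          * E = J * pk i j) →
      (∀ i j, b i j * E = E * pk i j) →
      ∀ i j, G i j * ((Matrix.fromRows J E).submatrix (⇑finSumFinEquiv.symm) id)
        = ((Matrix.fromRows J E).submatrix (⇑finSumFinEquiv.symm) id) * pk i j := by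
    intro J E pk hJ hE i j
    rw [hGij i j, Matrix.submatrix_mul_equiv, Matrix.fromBlocks_mul_fromRows,
      DiffAdd.submatrix_mul_left, Matrix.fromRows_mul, hJ i j, Matrix.zero_mul, zero_add,
      hE i j]
  -- A-side structured matrices
  set J1A : Matrix (Fin (n + n')) (Fin (n + n')) A := 1 with hJ1A
  set E1A : Matrix (Fin n') (Fin (n + n')) A := 0 with hE1A
  set J2A : Matrix (Fin (n + n')) (Fin (n + n')) A :=
    (Matrix.fromBlocks (1 : Matrix (Fin n) (Fin n) A) 0 0 0).submatrix
      (⇑finSumFinEquiv.symm) (⇑finSumFinEquiv.symm) with hJ2A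
  set E2A : Matrix (Fin n') (Fin (n + n')) A :=
    (Matrix.fromCols (0 : Matrix (Fin n') (Fin n) A)
      (cR • (1 : Matrix (Fin n') (Fin n') A))).submatrix id (⇑finSumFinEquiv.symm) with hE2A
  set J3A : Matrix (Fin (n + n')) (Fin (n + n')) A :=
    (Matrix.fromBlocks (γR • (1 : Matrix (Fin n) (Fin n) A)) 0 0
      (αR • (1 : Matrix (Fin n') (Fin n') A))).submatrix
      (⇑finSumFinEquiv.symm) (⇑finSumFinEquiv.symm) with hJ3A
  set E3A : Matrix (Fin n') (Fin (n + n')) A :=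
    (Matrix.fromCols (0 : Matrix (Fin n') (Fin n) A)
      (βR • (1 : Matrix (Fin n') (Fin n') A))).submatrix id (⇑finSumFinEquiv.symm) with hE3A
  -- scalar identities
  have I1 : cR * (ρ : R) = (r₂ : R) := by
    rw [hcR, mul_assoc, Units.inv_mul, mul_one]
  have I2 : αR * (r₁ : R) = γR * (r₃ : R) := by rw [hαR, hγR]; ring
  have I3 : βR * (ρ : R) = γR * (r₃ : R) := by rw [hβR, hγR]; ring
  -- the J-conditions
  have hJcond1 : ∀ i j, p₁ i j * J1A +
      (if (i : ℕ) = d + (u : ℕ) ∧ m - d ≤ (j : ℕ) then ((ρ : R) • vcat Y 0) * b vI j else 0)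
        * E1A = J1A * p₁ i j := by
    intro i j
    rw [hJ1A, hE1A, Matrix.mul_one, Matrix.one_mul, Matrix.mul_zero, add_zero]
  have hEcond1 : ∀ i j, b i j * E1A = E1A * p₁ i j := by
    intro i j
    rw [hE1A, Matrix.mul_zero, Matrix.zero_mul]
  have hJcond2 : ∀ i j, p₁ i j * J2A +
      (if (i : ℕ) = d + (u : ℕ) ∧ m - d ≤ (j : ℕ) then ((ρ : R) • vcat Y 0) * b vI j else 0)
        * E2A = J2A * p₂ i j := by
    intro i j
    rw [ha1 i j, ha2 i j, hJ2A, hE2A]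
    by_cases hψ : (i : ℕ) = d + (u : ℕ) ∧ m - d ≤ (j : ℕ)
    · rw [if_pos hψ, if_pos hψ, if_pos hψ, hcorner j,
        Matrix.submatrix_mul_equiv, DiffAdd.submatrix_mul_both, Matrix.submatrix_mul_equiv,
        DiffAdd.submatrix_add']
      refine congrArg (fun M : Matrix (Fin n ⊕ Fin n') (Fin n ⊕ Fin n') A =>
        M.submatrix (⇑finSumFinEquiv.symm) (⇑finSumFinEquiv.symm)) ?_
      rw [Matrix.fromBlocks_multiply, Matrix.fromBlocks_multiply,
        Matrix.fromRows_mul_fromCols, Matrix.fromBlocks_add]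
      simp only [Matrix.mul_zero, Matrix.zero_mul, Matrix.mul_one, Matrix.one_mul,
        add_zero, zero_add, Matrix.mul_smul, Matrix.smul_mul, smul_zero, smul_smul]
      rw [I1]
    · rw [if_neg hψ, if_neg hψ, if_neg hψ, Matrix.zero_mul, add_zero,
        Matrix.submatrix_mul_equiv, Matrix.submatrix_mul_equiv]
      refine congrArg (fun M : Matrix (Fin n ⊕ Fin n') (Fin n ⊕ Fin n') A =>
        M.submatrix (⇑finSumFinEquiv.symm) (⇑finSumFinEquiv.symm)) ?_
      rw [Matrix.fromBlocks_multiply, Matrix.fromBlocks_multiply]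
      simp only [Matrix.mul_zero, Matrix.zero_mul, Matrix.mul_one, Matrix.one_mul,
        add_zero, zero_add]
  have hEcond2 : ∀ i j, b i j * E2A = E2A * p₂ i j := by
    intro i j
    rw [ha2 i j, hE2A, DiffAdd.submatrix_mul_right, Matrix.submatrix_mul_equiv]
    refine congrArg (fun M : Matrix (Fin n') (Fin n ⊕ Fin n') A =>
      M.submatrix id (⇑finSumFinEquiv.symm)) ?_
    rw [Matrix.mul_fromCols, Matrix.fromCols_mul_fromBlocks]
    simp only [Matrix.mul_zero, Matrix.zero_mul, Matrix.mul_smul, Matrix.smul_mul,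
      Matrix.mul_one, Matrix.one_mul, add_zero, zero_add, smul_zero]
  have hJcond3 : ∀ i j, p₁ i j * J3A +
      (if (i : ℕ) = d + (u : ℕ) ∧ m - d ≤ (j : ℕ) then ((ρ : R) • vcat Y 0) * b vI j else 0)
        * E3A = J3A * p₃ i j := by
    intro i j
    rw [ha1 i j, ha3 i j, hJ3A, hE3A]
    by_cases hψ : (i : ℕ) = d + (u : ℕ) ∧ m - d ≤ (j : ℕ)
    · rw [if_pos hψ, if_pos hψ, if_pos hψ, hcorner j,
        Matrix.submatrix_mul_equiv, DiffAdd.submatrix_mul_both, Matrix.submatrix_mul_equiv,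
        DiffAdd.submatrix_add']
      refine congrArg (fun M : Matrix (Fin n ⊕ Fin n') (Fin n ⊕ Fin n') A =>
        M.submatrix (⇑finSumFinEquiv.symm) (⇑finSumFinEquiv.symm)) ?_
      rw [Matrix.fromBlocks_multiply, Matrix.fromBlocks_multiply,
        Matrix.fromRows_mul_fromCols, Matrix.fromBlocks_add]
      simp only [Matrix.mul_zero, Matrix.zero_mul, Matrix.mul_one, Matrix.one_mul,
        add_zero, zero_add, Matrix.mul_smul, Matrix.smul_mul, smul_zero, smul_smul]
      rw [I2, I3, ← smul_add, ← Matrix.add_mul, mul_comm γR (r₃ : R)]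
    · rw [if_neg hψ, if_neg hψ, if_neg hψ, Matrix.zero_mul, add_zero,
        Matrix.submatrix_mul_equiv, Matrix.submatrix_mul_equiv]
      refine congrArg (fun M : Matrix (Fin n ⊕ Fin n') (Fin n ⊕ Fin n') A =>
        M.submatrix (⇑finSumFinEquiv.symm) (⇑finSumFinEquiv.symm)) ?_
      rw [Matrix.fromBlocks_multiply, Matrix.fromBlocks_multiply]
      simp only [Matrix.mul_zero, Matrix.zero_mul, Matrix.mul_one, Matrix.one_mul,
        add_zero, zero_add, smul_zero, Matrix.mul_smul, Matrix.smul_mul]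
  have hEcond3 : ∀ i j, b i j * E3A = E3A * p₃ i j := by
    intro i j
    rw [ha3 i j, hE3A, DiffAdd.submatrix_mul_right, Matrix.submatrix_mul_equiv]
    refine congrArg (fun M : Matrix (Fin n') (Fin n ⊕ Fin n') A =>
      M.submatrix id (⇑finSumFinEquiv.symm)) ?_
    rw [Matrix.mul_fromCols, Matrix.fromCols_mul_fromBlocks]
    simp only [Matrix.mul_zero, Matrix.zero_mul, Matrix.mul_smul, Matrix.smul_mul,
      Matrix.mul_one, Matrix.one_mul, add_zero, zero_add, smul_zero]
  -- the scalar matrices over R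
  set S1 : Matrix (Fin (n + n' + n')) (Fin (n + n')) R :=
    (Matrix.fromRows (1 : Matrix (Fin (n + n')) (Fin (n + n')) R) 0).submatrix
      (⇑finSumFinEquiv.symm) id with hS1
  set JR2 : Matrix (Fin (n + n')) (Fin (n + n')) R :=
    (Matrix.fromBlocks (1 : Matrix (Fin n) (Fin n) R) 0 0 0).submatrix
      (⇑finSumFinEquiv.symm) (⇑finSumFinEquiv.symm) with hJR2
  set ER2 : Matrix (Fin n') (Fin (n + n')) R :=
    (Matrix.fromCols (0 : Matrix (Fin n') (Fin n) R)
      (cR • (1 : Matrix (Fin n') (Fin n') R))).submatrix id (⇑finSumFinEquiv.symm) with hER2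
  set S2 : Matrix (Fin (n + n' + n')) (Fin (n + n')) R :=
    (Matrix.fromRows JR2 ER2).submatrix (⇑finSumFinEquiv.symm) id with hS2
  set JR3 : Matrix (Fin (n + n')) (Fin (n + n')) R :=
    (Matrix.fromBlocks (γR • (1 : Matrix (Fin n) (Fin n) R)) 0 0
      (αR • (1 : Matrix (Fin n') (Fin n') R))).submatrix
      (⇑finSumFinEquiv.symm) (⇑finSumFinEquiv.symm) with hJR3
  set ER3 : Matrix (Fin n') (Fin (n + n')) R :=
    (Matrix.fromCols (0 : Matrix (Fin n') (Fin n) R)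
      (βR • (1 : Matrix (Fin n') (Fin n') R))).submatrix id (⇑finSumFinEquiv.symm) with hER3
  set S3 : Matrix (Fin (n + n' + n')) (Fin (n + n')) R :=
    (Matrix.fromRows JR3 ER3).submatrix (⇑finSumFinEquiv.symm) id with hS3
  -- their images in A
  have hone : (1 : Matrix (Fin (n + n')) (Fin (n + n')) R).map (⇑φ)
      = (1 : Matrix (Fin (n + n')) (Fin (n + n')) A) :=
    Matrix.map_one (⇑φ) (map_zero φ) (map_one φ)
  have honen : (1 : Matrix (Fin n) (Fin n) R).map (⇑φ) = (1 : Matrix (Fin n) (Fin n) A) :=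
    Matrix.map_one (⇑φ) (map_zero φ) (map_one φ)
  have honen' : (1 : Matrix (Fin n') (Fin n') R).map (⇑φ) = (1 : Matrix (Fin n') (Fin n') A) :=
    Matrix.map_one (⇑φ) (map_zero φ) (map_one φ)
  have hS1A : S1.map (⇑φ) = (Matrix.fromRows (1 : Matrix (Fin (n + n')) (Fin (n + n')) A)
      (0 : Matrix (Fin n') (Fin (n + n')) A)).submatrix (⇑finSumFinEquiv.symm) id := by
    rw [hS1, ← Matrix.submatrix_map, DiffAdd.map_fromRows, hone,
      Matrix.map_zero (⇑φ) (map_zero φ)]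
  have hJ2map : JR2.map (⇑φ) = J2A := by
    rw [hJR2, hJ2A, ← Matrix.submatrix_map]
    refine congrArg (fun M : Matrix (Fin n ⊕ Fin n') (Fin n ⊕ Fin n') A =>
      M.submatrix (⇑finSumFinEquiv.symm) (⇑finSumFinEquiv.symm)) ?_
    rw [Matrix.fromBlocks_map, honen, Matrix.map_zero (⇑φ) (map_zero φ),
      Matrix.map_zero (⇑φ) (map_zero φ), Matrix.map_zero (⇑φ) (map_zero φ)]
  have hE2map : ER2.map (⇑φ) = E2A := by
    rw [hER2, hE2A, ← Matrix.submatrix_map]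
    refine congrArg (fun M : Matrix (Fin n') (Fin n ⊕ Fin n') A =>
      M.submatrix id (⇑finSumFinEquiv.symm)) ?_
    rw [DiffAdd.map_fromColumns, Matrix.map_zero (⇑φ) (map_zero φ),
      DiffAdd.map_algebraMap_smul, honen']
  have hS2A : S2.map (⇑φ) = (Matrix.fromRows J2A E2A).submatrix (⇑finSumFinEquiv.symm) id := by
    rw [hS2, ← Matrix.submatrix_map, DiffAdd.map_fromRows, hJ2map, hE2map]
  have hJ3map : JR3.map (⇑φ) = J3A := by
    rw [hJR3, hJ3A, ← Matrix.submatrix_map]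
    refine congrArg (fun M : Matrix (Fin n ⊕ Fin n') (Fin n ⊕ Fin n') A =>
      M.submatrix (⇑finSumFinEquiv.symm) (⇑finSumFinEquiv.symm)) ?_
    rw [Matrix.fromBlocks_map, DiffAdd.map_algebraMap_smul, honen,
      DiffAdd.map_algebraMap_smul, honen', Matrix.map_zero (⇑φ) (map_zero φ),
      Matrix.map_zero (⇑φ) (map_zero φ)]
  have hE3map : ER3.map (⇑φ) = E3A := by
    rw [hER3, hE3A, ← Matrix.submatrix_map]
    refine congrArg (fun M : Matrix (Fin n') (Fin n ⊕ Fin n') A =>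
      M.submatrix id (⇑finSumFinEquiv.symm)) ?_
    rw [DiffAdd.map_fromColumns, Matrix.map_zero (⇑φ) (map_zero φ),
      DiffAdd.map_algebraMap_smul, honen']
  have hS3A : S3.map (⇑φ) = (Matrix.fromRows J3A E3A).submatrix (⇑finSumFinEquiv.symm) id := by
    rw [hS3, ← Matrix.submatrix_map, DiffAdd.map_fromRows, hJ3map, hE3map]
  -- the intertwining hypotheses
  have hint₁ : ∀ i j, G i j * S1.map (⇑φ) = S1.map (⇑φ) * p₁ i j := by
    intro i j
    rw [hS1A]
    exact stage 1 0 p₁ hJcond1 hEcond1 i j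
  have hint₂ : ∀ i j, G i j * S2.map (⇑φ) = S2.map (⇑φ) * p₂ i j := by
    intro i j
    rw [hS2A]
    exact stage J2A E2A p₂ hJcond2 hEcond2 i j
  have hint₃ : ∀ i j, G i j * S3.map (⇑φ) = S3.map (⇑φ) * p₃ i j := by
    intro i j
    rw [hS3A]
    exact stage J3A E3A p₃ hJcond3 hEcond3 i j
  -- apply the key lemma
  have eq1 := DiffAdd.key hd C hC f hf p₁ h₁ G hρ S1 hint₁
  have eq2 := DiffAdd.key hd C hC f hf p₂ h₂ G hρ S2 hint₂
  have eq3 := DiffAdd.key hd C hC f hf p₃ h₃ G hρ S3 hint₃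
  rw [hH₁] at eq1
  rw [hH₂] at eq2
  rw [hH₃] at eq3
  -- extract entries
  ext i j
  have e1 := congrArg (fun M : Matrix (Fin (n + n' + n')) (Fin (n + n')) W =>
    M (finSumFinEquiv (Sum.inl (finSumFinEquiv (Sum.inl i)))) (finSumFinEquiv (Sum.inr j))) eq1
  simp only [rmulL, rmulR, Matrix.of_apply] at e1
  rw [← Equiv.sum_comp (finSumFinEquiv : Fin (n + n') ⊕ Fin n' ≃ Fin (n + n' + n'))] at e1
  simp only [hS1, Matrix.submatrix_apply, Equiv.symm_apply_apply, id_eq,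
    Matrix.fromRows_apply_inl, Matrix.fromRows_apply_inr, Fintype.sum_sum_type,
    Matrix.one_apply, Matrix.zero_apply, ite_smul, one_smul, zero_smul,
    Finset.sum_ite_eq, Finset.sum_ite_eq', Finset.mem_univ, if_true,
    Finset.sum_const_zero, add_zero, zero_add, triW, Matrix.reindex_apply,
    Matrix.fromBlocks_apply₁₂] at e1
  -- entry facts about the scalar matrices
  have hsum_ne : ∀ (z : Fin n') (w : Fin n),
      (finSumFinEquiv (Sum.inl w) : Fin (n + n')) ≠ finSumFinEquiv (Sum.inr z) := by
    intro z w h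
    exact absurd (finSumFinEquiv.injective h) (by simp)
  have hJR2row : ∀ k : Fin (n + n'), JR2 (finSumFinEquiv (Sum.inl i)) k
      = if finSumFinEquiv (Sum.inl i) = k then (1 : R) else 0 := by
    intro k
    rw [hJR2, Matrix.submatrix_apply, Equiv.symm_apply_apply]
    rcases hk : ((finSumFinEquiv.symm : Fin (n + n') ≃ Fin n ⊕ Fin n') k) with z | z
    · have hk2 : k = finSumFinEquiv (Sum.inl z) := by rw [← hk, Equiv.apply_symm_apply]
      subst hk2
      rw [Matrix.fromBlocks_apply₁₁, Matrix.one_apply]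
      simp only [EmbeddingLike.apply_eq_iff_eq, Sum.inl.injEq]
    · have hk2 : k = finSumFinEquiv (Sum.inr z) := by rw [← hk, Equiv.apply_symm_apply]
      subst hk2
      rw [Matrix.fromBlocks_apply₁₂, Matrix.zero_apply, if_neg (hsum_ne z i)]
  have hJR2col : ∀ k : Fin (n + n'), JR2 k (finSumFinEquiv (Sum.inr j)) = 0 := by
    intro k
    rw [hJR2, Matrix.submatrix_apply, Equiv.symm_apply_apply]
    rcases ((finSumFinEquiv.symm : Fin (n + n') ≃ Fin n ⊕ Fin n') k) with z | z
    · rw [Matrix.fromBlocks_apply₁₂, Matrix.zero_apply]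
    · rw [Matrix.fromBlocks_apply₂₂, Matrix.zero_apply]
  have hER2col : ∀ k : Fin n', ER2 k (finSumFinEquiv (Sum.inr j))
      = if k = j then cR else 0 := by
    intro k
    rw [hER2, Matrix.submatrix_apply, Equiv.symm_apply_apply, Matrix.fromCols_apply_inr,
      Matrix.smul_apply, Matrix.one_apply, smul_ite, smul_eq_mul, mul_one, smul_zero]
    simp only [id_eq]
  have hJR3row : ∀ k : Fin (n + n'), JR3 (finSumFinEquiv (Sum.inl i)) k
      = if finSumFinEquiv (Sum.inl i) = k then γR else 0 := by
    intro k
    rw [hJR3, Matrix.submatrix_apply, Equiv.symm_apply_apply]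
    rcases hk : ((finSumFinEquiv.symm : Fin (n + n') ≃ Fin n ⊕ Fin n') k) with z | z
    · have hk2 : k = finSumFinEquiv (Sum.inl z) := by rw [← hk, Equiv.apply_symm_apply]
      subst hk2
      rw [Matrix.fromBlocks_apply₁₁, Matrix.smul_apply, Matrix.one_apply, smul_ite,
        smul_eq_mul, mul_one, smul_zero]
      simp only [EmbeddingLike.apply_eq_iff_eq, Sum.inl.injEq]
    · have hk2 : k = finSumFinEquiv (Sum.inr z) := by rw [← hk, Equiv.apply_symm_apply]
      subst hk2
      rw [Matrix.fromBlocks_apply₁₂, Matrix.zero_apply, if_neg (hsum_ne z i)]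
  have hJR3col : ∀ k : Fin (n + n'), JR3 k (finSumFinEquiv (Sum.inr j))
      = if k = finSumFinEquiv (Sum.inr j) then αR else 0 := by
    intro k
    rw [hJR3, Matrix.submatrix_apply, Equiv.symm_apply_apply]
    rcases hk : ((finSumFinEquiv.symm : Fin (n + n') ≃ Fin n ⊕ Fin n') k) with z | z
    · have hk2 : k = finSumFinEquiv (Sum.inl z) := by rw [← hk, Equiv.apply_symm_apply]
      subst hk2
      rw [Matrix.fromBlocks_apply₁₂, Matrix.zero_apply, if_neg (hsum_ne j z)]
    · have hk2 : k = finSumFinEquiv (Sum.inr z) := by rw [← hk, Equiv.apply_symm_apply]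
      subst hk2
      rw [Matrix.fromBlocks_apply₂₂, Matrix.smul_apply, Matrix.one_apply, smul_ite,
        smul_eq_mul, mul_one, smul_zero]
      simp only [EmbeddingLike.apply_eq_iff_eq, Sum.inr.injEq]
  have hER3col : ∀ k : Fin n', ER3 k (finSumFinEquiv (Sum.inr j))
      = if k = j then βR else 0 := by
    intro k
    rw [hER3, Matrix.submatrix_apply, Equiv.symm_apply_apply, Matrix.fromCols_apply_inr,
      Matrix.smul_apply, Matrix.one_apply, smul_ite, smul_eq_mul, mul_one, smul_zero]
    simp only [id_eq]
  -- extract the other two equations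
  have e2' := congrArg (fun M : Matrix (Fin (n + n' + n')) (Fin (n + n')) W =>
    M (finSumFinEquiv (Sum.inl (finSumFinEquiv (Sum.inl i)))) (finSumFinEquiv (Sum.inr j))) eq2
  simp only [rmulL, rmulR, Matrix.of_apply] at e2'
  rw [← Equiv.sum_comp (finSumFinEquiv : Fin (n + n') ⊕ Fin n' ≃ Fin (n + n' + n'))] at e2'
  simp only [hS2, Matrix.submatrix_apply, Equiv.symm_apply_apply, id_eq,
    Matrix.fromRows_apply_inl, Matrix.fromRows_apply_inr, Fintype.sum_sum_type,
    hJR2row, hJR2col, hER2col, ite_smul, one_smul, zero_smul,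
    Finset.sum_ite_eq, Finset.sum_ite_eq', Finset.mem_univ, if_true,
    Finset.sum_const_zero, add_zero, zero_add, triW, Matrix.reindex_apply,
    Matrix.fromBlocks_apply₁₂] at e2'
  have e3' := congrArg (fun M : Matrix (Fin (n + n' + n')) (Fin (n + n')) W =>
    M (finSumFinEquiv (Sum.inl (finSumFinEquiv (Sum.inl i)))) (finSumFinEquiv (Sum.inr j))) eq3
  simp only [rmulL, rmulR, Matrix.of_apply] at e3'
  rw [← Equiv.sum_comp (finSumFinEquiv : Fin (n + n') ⊕ Fin n' ≃ Fin (n + n' + n'))] at e3'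
  simp only [hS3, Matrix.submatrix_apply, Equiv.symm_apply_apply, id_eq,
    Matrix.fromRows_apply_inl, Matrix.fromRows_apply_inr, Fintype.sum_sum_type,
    hJR3row, hJR3col, hER3col, ite_smul, one_smul, zero_smul,
    Finset.sum_ite_eq, Finset.sum_ite_eq', Finset.mem_univ, if_true,
    Finset.sum_const_zero, add_zero, zero_add, triW, Matrix.reindex_apply,
    Matrix.fromBlocks_apply₁₂] at e3'
  -- final scalar algebra
  set μ : R := ((r₃⁻¹ : Rˣ) : R) * ((r₁⁻¹ : Rˣ) : R) * ((ρ⁻¹ : Rˣ) : R) with hμ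
  have k1 : ((r₁⁻¹ : Rˣ) : R) * (r₁ : R) = 1 := Units.inv_mul r₁
  have k2 : ((r₂⁻¹ : Rˣ) : R) * (r₂ : R) = 1 := Units.inv_mul r₂
  have k3 : ((r₃⁻¹ : Rˣ) : R) * (r₃ : R) = 1 := Units.inv_mul r₃
  have kρ : ((ρ⁻¹ : Rˣ) : R) * (ρ : R) = 1 := Units.inv_mul ρ
  have I4 : μ * γR = ((r₃⁻¹ : Rˣ) : R) := by
    rw [hμ, hγR]
    linear_combination (((r₃⁻¹ : Rˣ) : R) * ((ρ⁻¹ : Rˣ) : R) * (ρ : R)) * k1 +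
      ((r₃⁻¹ : Rˣ) : R) * kρ
  have I5 : μ * αR = ((r₁⁻¹ : Rˣ) : R) := by
    rw [hμ, hαR]
    linear_combination (((r₁⁻¹ : Rˣ) : R) * ((ρ⁻¹ : Rˣ) : R) * (ρ : R)) * k3 +
      ((r₁⁻¹ : Rˣ) : R) * kρ
  have I6 : μ * βR = ((ρ⁻¹ : Rˣ) : R) := by
    rw [hμ, hβR]
    linear_combination (((ρ⁻¹ : Rˣ) : R) * ((r₁⁻¹ : Rˣ) : R) * (r₁ : R)) * k3 +
      ((ρ⁻¹ : Rˣ) : R) * k1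
  have I7 : ((r₂⁻¹ : Rˣ) : R) * cR = ((ρ⁻¹ : Rˣ) : R) := by
    rw [hcR]
    linear_combination ((ρ⁻¹ : Rˣ) : R) * k2
  rw [Matrix.smul_apply, Matrix.add_apply, Matrix.smul_apply, Matrix.smul_apply,
    e1, e2', _root_.smul_smul, I7, ← I4, ← _root_.smul_smul, e3', _root_.smul_add,
    _root_.smul_smul, _root_.smul_smul, I5, I6]
end

section
/- The Grassmannian B-resolvent is an nc function: for π ∈ Gr^{(m-d;m)}_1(A) and (u,v) ∈ [m-d]×[d], the map R̃^{(d;m)}(π;B|v,u) : ρ̃^{(d;m)}(π;B) → M(A), defined by σ ↦ [B_{v,m-d+1},...,B_{v,m}] · ζ_u where B ∈ σ, a ∈ π, and ζ_u ∈ M_{d,1}(M_n(A)) is the u-th block in the bottom-right part of r^{(d;m)}(a^{⊕̃n};B)^{-1}, is well defined, graded, direct-sum-preserving, and similarity-preserving. -/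
open Matrix

section ResolventHelpers

variable {R : Type} [CommRing R] {A : Type} [Ring A] [Algebra R A]

lemma sum_shift' {M : Type} [AddCommMonoid M] {m c e : ℕ} (hce : c + e = m)
    (f : Fin m → M) (h0 : ∀ k : Fin m, (k : ℕ) < c → f k = 0) :
    ∑ k, f k = ∑ k : Fin e, f ⟨c + (k : ℕ), by have := k.isLt; omega⟩ := by
  subst hce
  rw [Fin.sum_univ_add]
  have h1 : ∑ i : Fin c, f (Fin.castAdd e i) = 0 :=
    Finset.sum_eq_zero fun i _ => h0 _ i.isLt
  rw [h1, zero_add]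
  exact Finset.sum_congr rfl fun k _ => rfl

lemma sum_cut' {M : Type} [AddCommMonoid M] {m e : ℕ} (he : e ≤ m)
    (f : Fin m → M) (h0 : ∀ k : Fin m, e ≤ (k : ℕ) → f k = 0) :
    ∑ k, f k = ∑ k : Fin e, f ⟨(k : ℕ), by have := k.isLt; omega⟩ := by
  obtain ⟨c, rfl⟩ : ∃ c, m = e + c := ⟨m - e, by omega⟩
  rw [Fin.sum_univ_add]
  have h2 : ∑ i : Fin c, f (Fin.natAdd e i) = 0 :=
    Finset.sum_eq_zero fun i _ => h0 _ (Nat.le_add_right _ _)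
  rw [h2, add_zero]
  exact Finset.sum_congr rfl fun k _ => rfl

/-- The block-diagonal projection onto the last `d` block rows/columns. -/
def Pi0 (A : Type) [Ring A] (m d n : ℕ) : BMat A m n :=
  Matrix.diagonal fun i => if m - d ≤ (i : ℕ) then 1 else 0

/-- The block-diagonal transition matrix built from `Γ₀` (acting on the first
`m - d` block columns, amplified) and `Γ` (acting on the last `d` block columns). -/
def Delta0 {A : Type} [Ring A] (m d n : ℕ) (G0 : BMat A m 1) (G : BMat A m n) : BMat A m n :=
  Matrix.of fun i j =>
    if hj : (j : ℕ) < m - d then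
      if hi : (i : ℕ) < m - d then
        Matrix.diagonal fun _ =>
          G0 ⟨d + (i : ℕ), by omega⟩ ⟨d + (j : ℕ), by omega⟩ 0 0
      else 0
    else if (i : ℕ) < m - d then 0 else G i j

lemma resVal_entry {m d n : ℕ} (hd : d ≤ m) (v : Fin d) (u : Fin (m - d))
    (P Bm Rinv : BMat A m n) :
    resVal hd v u Bm Rinv =
      (rmat hd P Bm * Pi0 A m d n * Rinv)
        ⟨(v : ℕ), lt_of_lt_of_le v.isLt hd⟩ ⟨d + (u : ℕ), by have := u.isLt; omega⟩ := by
  rw [Matrix.mul_apply]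
  rw [sum_shift' (c := m - d) (e := d) (by omega)
      (f := fun l => (rmat hd P Bm * Pi0 A m d n) ⟨(v : ℕ), lt_of_lt_of_le v.isLt hd⟩ l *
        Rinv l ⟨d + (u : ℕ), by have := u.isLt; omega⟩)
      (fun k hk => by
        show (rmat hd P Bm * Pi0 A m d n) _ k * Rinv k _ = 0
        simp only [Pi0]
        rw [Matrix.mul_diagonal, if_neg (Nat.not_le.mpr hk), mul_zero, zero_mul])]
  unfold resVal
  refine Finset.sum_congr rfl fun k _ => ?_
  simp only [Pi0, Matrix.mul_diagonal]
  rw [if_pos (by simp)]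
  rw [mul_one]
  congr 1
  simp [rmat]

lemma rmat_mul_Delta0 {m d n : ℕ} (hd : d ≤ m)
    (p : BMat A m 1) (Bm : BMat A m n) (G0 : BMat A m 1) (G : BMat A m n)
    (hG0 : ∀ i j : Fin m, (i : ℕ) < d → d ≤ (j : ℕ) → G0 i j = 0)
    (hG : ∀ i j : Fin m, (i : ℕ) < m - d → m - d ≤ (j : ℕ) → G i j = 0) :
    rmat hd (ampl (p * G0) n) (Bm * G) = rmat hd (ampl p n) Bm * Delta0 m d n G0 G := by
  ext i j : 1
  rw [Matrix.mul_apply]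
  by_cases hj : (j : ℕ) < m - d
  · have hdj : d + (j : ℕ) < m := by omega
    have hlhs : rmat hd (ampl (p * G0) n) (Bm * G) i j =
        Matrix.diagonal fun _ : Fin n => ∑ k, p i k 0 0 * G0 k ⟨d + (j : ℕ), hdj⟩ 0 0 := by
      simp [rmat, hj, ampl, Matrix.mul_apply, Matrix.sum_apply]
    rw [hlhs]
    rw [sum_shift' (c := d) (e := m - d) (by omega)
        (f := fun k => p i k 0 0 * G0 k ⟨d + (j : ℕ), hdj⟩ 0 0)
        (fun k hk => by
          show p i k 0 0 * G0 k ⟨d + (j : ℕ), hdj⟩ 0 0 = 0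
          rw [hG0 k _ hk (Nat.le_add_right _ _)]; simp)]
    rw [sum_cut' (e := m - d) (Nat.sub_le m d)
        (f := fun k => rmat hd (ampl p n) Bm i k * Delta0 m d n G0 G k j)
        (fun k hk => by
          show rmat hd (ampl p n) Bm i k * Delta0 m d n G0 G k j = 0
          have h2 : Delta0 m d n G0 G k j = 0 := by
            simp [Delta0, hj, Nat.not_lt.mpr hk]
          rw [h2, mul_zero])]
    rw [show (Matrix.diagonal fun _ : Fin n =>
          ∑ k : Fin (m - d), p i ⟨d + (k:ℕ), by have := k.isLt; omega⟩ 0 0 *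
            G0 ⟨d + (k:ℕ), by have := k.isLt; omega⟩ ⟨d + (j : ℕ), hdj⟩ 0 0) =
        ∑ k : Fin (m - d), Matrix.diagonal fun _ : Fin n =>
          p i ⟨d + (k:ℕ), by have := k.isLt; omega⟩ 0 0 *
            G0 ⟨d + (k:ℕ), by have := k.isLt; omega⟩ ⟨d + (j : ℕ), hdj⟩ 0 0 by
      ext a b
      by_cases hab : a = b <;> simp [Matrix.diagonal_apply, hab, Matrix.sum_apply]]
    refine Finset.sum_congr rfl fun k _ => ?_
    simp [rmat, Delta0, hj, k.isLt, ampl, Matrix.diagonal_mul_diagonal]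
  · have hlhs : rmat hd (ampl (p * G0) n) (Bm * G) i j = ∑ k, Bm i k * G k j := by
      simp [rmat, hj, Matrix.mul_apply]
    rw [hlhs]
    refine Finset.sum_congr rfl fun k _ => ?_
    by_cases hk : (k : ℕ) < m - d
    · rw [hG k j hk (Nat.not_lt.mp hj)]
      simp [Delta0, hj, hk]
    · simp [rmat, Delta0, hj, hk]

lemma Delta0_comm_Pi0 {m d n : ℕ} (G0 : BMat A m 1) (G : BMat A m n) :
    Delta0 m d n G0 G * Pi0 A m d n = Pi0 A m d n * Delta0 m d n G0 G := by
  ext i j : 1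
  simp only [Pi0, Matrix.mul_diagonal, Matrix.diagonal_mul]
  by_cases hi : (i : ℕ) < m - d <;> by_cases hj : (j : ℕ) < m - d <;>
    simp [Delta0, hi, hj, Nat.not_le.mpr, Nat.not_lt.mp]

lemma dsumW_eq_dsumMat {n n' : ℕ} (X : Mat A n) (Y : Mat A n') :
    dsumW X Y = dsumMat X Y := rfl

lemma dsumMat_mul {n n' : ℕ} (X X' : Mat A n) (Y Y' : Mat A n') :
    dsumMat X Y * dsumMat X' Y' = dsumMat (X * X') (Y * Y') := by
  unfold dsumMat
  simp only [Matrix.reindex_apply]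
  rw [Matrix.submatrix_mul_equiv, Matrix.fromBlocks_multiply]
  simp

lemma dsumMat_one {n n' : ℕ} :
    dsumMat (1 : Mat A n) (1 : Mat A n') = 1 := by
  unfold dsumMat
  rw [Matrix.fromBlocks_one]
  simp [Matrix.reindex_apply, Matrix.submatrix_one_equiv]

lemma dsumMat_zero {n n' : ℕ} :
    dsumMat (0 : Mat A n) (0 : Mat A n') = 0 := by
  unfold dsumMat
  simp [Matrix.fromBlocks_zero]

lemma dsumMat_add {n n' : ℕ} (X X' : Mat A n) (Y Y' : Mat A n') :
    dsumMat (X + X') (Y + Y') = dsumMat X Y + dsumMat X' Y' := by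
  ext a b
  simp only [dsumMat, Matrix.reindex_apply, Matrix.submatrix_apply, Matrix.add_apply]
  cases finSumFinEquiv.symm a <;> cases finSumFinEquiv.symm b <;>
    simp [Matrix.fromBlocks]

lemma dsumMat_sum {ι : Type} (t : Finset ι) {n n' : ℕ} (f : ι → Mat A n) (g : ι → Mat A n') :
    dsumMat (∑ i ∈ t, f i) (∑ i ∈ t, g i) = ∑ i ∈ t, dsumMat (f i) (g i) := by
  classical
  induction t using Finset.induction with
  | empty => simp [dsumMat_zero]
  | insert _ _ h ih => simp [Finset.sum_insert h, dsumMat_add, ih]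

lemma dsum_mul {m n n' : ℕ} (X X' : BMat A m n) (Y Y' : BMat A m n') :
    dsum X Y * dsum X' Y' = dsum (X * X') (Y * Y') := by
  ext i j : 1
  show ∑ k, dsumMat (X i k) (Y i k) * dsumMat (X' k j) (Y' k j) = _
  simp only [dsumMat_mul]
  rw [← dsumMat_sum]
  rfl

lemma dsum_one {m n n' : ℕ} : dsum (1 : BMat A m n) (1 : BMat A m n') = 1 := by
  ext i j : 1
  show dsumMat ((1 : BMat A m n) i j) ((1 : BMat A m n') i j) = (1 : BMat A m (n+n')) i j
  by_cases h : i = j <;> simp [Matrix.one_apply, h, dsumMat_one, dsumMat_zero]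

lemma bmap_mul (D : Subalgebra R A) {m n : ℕ} (x y : BMat ↥D m n) :
    bmap D (x * y) = bmap D x * bmap D y := by
  have he : ∀ z : BMat ↥D m n, bmap D z =
      ((D.val.toRingHom.mapMatrix : Mat ↥D n →+* Mat A n).mapMatrix :
        BMat ↥D m n →+* BMat A m n) z := fun z => rfl
  rw [he, he, he, _root_.map_mul]

lemma bmap_zero_entry (D : Subalgebra R A) {m n : ℕ} (x : BMat ↥D m n) (i j : Fin m)
    (h : x i j = 0) : bmap D x i j = 0 := by
  show (x i j).map (fun y => (y : A)) = 0
  rw [h]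
  exact Matrix.map_zero _ (by simp)

lemma bmap_dsum (D : Subalgebra R A) {m n n' : ℕ} (b : BMat ↥D m n) (b' : BMat ↥D m n') :
    bmap D (dsum b b') = dsum (bmap D b) (bmap D b') := by
  ext i j : 1
  show (dsumMat (b i j) (b' i j)).map (fun y => (y : A)) =
      dsumMat ((b i j).map (fun y => (y : A))) ((b' i j).map (fun y => (y : A)))
  unfold dsumMat
  simp only [Matrix.reindex_apply]
  rw [← Matrix.submatrix_map, Matrix.fromBlocks_map]
  congr 1

lemma ampl_dsum {m n n' : ℕ} (p : BMat A m 1) :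
    ampl p (n + n') = dsum (ampl p n) (ampl p n') := by
  ext i j : 1
  show Matrix.diagonal _ = dsumMat (Matrix.diagonal _) (Matrix.diagonal _)
  unfold dsumMat
  rw [Matrix.fromBlocks_diagonal]
  ext a b
  simp only [Matrix.reindex_apply, Matrix.submatrix_apply]
  by_cases h : a = b
  · subst h; simp
  · rw [Matrix.diagonal_apply_ne _ h, Matrix.diagonal_apply_ne]
    exact fun hc => h (finSumFinEquiv.symm.injective hc)

lemma rmat_dsum {m d n n' : ℕ} (hd : d ≤ m) (P Q : BMat A m n) (P' Q' : BMat A m n') :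
    rmat hd (dsum P P') (dsum Q Q') = dsum (rmat hd P Q) (rmat hd P' Q') := by
  ext i j : 1
  by_cases h : (j : ℕ) < m - d <;> simp [rmat, dsum, h]

lemma resVal_dsum {m d n n' : ℕ} (hd : d ≤ m) (v : Fin d) (u : Fin (m - d))
    (Bm Rinv : BMat A m n) (Bm' Rinv' : BMat A m n') :
    resVal hd v u (dsum Bm Bm') (dsum Rinv Rinv') =
      dsumMat (resVal hd v u Bm Rinv) (resVal hd v u Bm' Rinv') := by
  unfold resVal
  rw [dsumMat_sum]
  exact Finset.sum_congr rfl fun j _ => dsumMat_mul _ _ _ _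

lemma bmap_simAct (D : Subalgebra R A) {m n : ℕ} (s : Matrix (Fin n) (Fin n) R)
    (b : BMat ↥D m n) :
    bmap D (simAct s b) = Matrix.of fun i j => s.map (algebraMap R A) * (bmap D b i j) := by
  ext i j : 1
  show ((s.map (algebraMap R ↥D) * b i j).map (D.val.toRingHom : ↥D →+* A)) = _
  rw [Matrix.map_mul, Matrix.map_map]
  rfl

lemma rmulL_eq {n : ℕ} (s : Matrix (Fin n) (Fin n) R) (X : Mat A n) :
    rmulL (R := R) s X = s.map (algebraMap R A) * X := by
  ext a b
  simp [rmulL, Matrix.mul_apply, Matrix.map_apply, Algebra.smul_def]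

lemma rmulR_eq {n : ℕ} (X : Mat A n) (t : Matrix (Fin n) (Fin n) R) :
    rmulR (R := R) X t = X * t.map (algebraMap R A) := by
  ext a b
  simp only [rmulR, Matrix.of_apply, Matrix.mul_apply, Matrix.map_apply, Algebra.smul_def]
  exact Finset.sum_congr rfl fun k _ => Algebra.commutes _ _

end ResolventHelpers

/-- the `(d;m)`-Grassmannian `B`-resolvent is a well defined nc function:
independent of representatives, direct-sum-preserving, and similarity-preserving. -/
theorem resolvent_isNCFun {R : Type} [CommRing R] {A : Type} [Ring A] [Algebra R A]
    (D : Subalgebra R A) (m d : ℕ) (hd1 : 1 ≤ d) (hd : d ≤ m)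
    (p : BMat A m 1) (hp : IsUnit p) (v : Fin d) (u : Fin (m - d)) :
    (∀ (n : ℕ) (b b' : BMat (↥D) m n) (p' : BMat A m 1), IsUnit p' →
      grel m (m - d) 1 (Nat.sub_le m d) p p' →
      ResMem hd p D b → ResMem hd p D b' → grel m d n hd b b' →
      ∀ Rinv Rinv' : BMat A m n,
        rmat hd (ampl p n) (bmap D b) * Rinv = 1 →
        Rinv * rmat hd (ampl p n) (bmap D b) = 1 →
        rmat hd (ampl p' n) (bmap D b') * Rinv' = 1 →
        Rinv' * rmat hd (ampl p' n) (bmap D b') = 1 →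
        resVal hd v u (bmap D b) Rinv = resVal hd v u (bmap D b') Rinv') ∧
    (∀ (n n' : ℕ) (b : BMat (↥D) m n) (b' : BMat (↥D) m n'),
      ResMem hd p D b → ResMem hd p D b' →
      ∀ (Rinv : BMat A m n) (Rinv' : BMat A m n') (Rinv2 : BMat A m (n + n')),
        rmat hd (ampl p n) (bmap D b) * Rinv = 1 →
        Rinv * rmat hd (ampl p n) (bmap D b) = 1 →
        rmat hd (ampl p n') (bmap D b') * Rinv' = 1 →
        Rinv' * rmat hd (ampl p n') (bmap D b') = 1 →
        rmat hd (ampl p (n + n')) (bmap D (dsum b b')) * Rinv2 = 1 →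
        Rinv2 * rmat hd (ampl p (n + n')) (bmap D (dsum b b')) = 1 →
        resVal hd v u (bmap D (dsum b b')) Rinv2 =
          dsumW (resVal hd v u (bmap D b) Rinv) (resVal hd v u (bmap D b') Rinv')) ∧
    (∀ (n : ℕ) (s : (Matrix (Fin n) (Fin n) R)ˣ) (b : BMat (↥D) m n),
      ResMem hd p D b →
      ∀ Rinv Rinv2 : BMat A m n,
        rmat hd (ampl p n) (bmap D b) * Rinv = 1 →
        Rinv * rmat hd (ampl p n) (bmap D b) = 1 →
        rmat hd (ampl p n) (bmap D (simAct (s : Matrix (Fin n) (Fin n) R) b)) * Rinv2 = 1 →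
        Rinv2 * rmat hd (ampl p n) (bmap D (simAct (s : Matrix (Fin n) (Fin n) R) b)) = 1 →
        resVal hd v u (bmap D (simAct (s : Matrix (Fin n) (Fin n) R) b)) Rinv2 =
          rmulR (rmulL (s : Matrix (Fin n) (Fin n) R) (resVal hd v u (bmap D b) Rinv))
            ((s⁻¹ : (Matrix (Fin n) (Fin n) R)ˣ) : Matrix (Fin n) (Fin n) R)) := by
  constructor
  · -- well-definedness
    intro n b b' p' hp' hpg hbm hbm' hbb' Rinv Rinv' h1 h2 h3 h4
    obtain ⟨Γ, hΓ, hbΓ⟩ := hbb'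
    obtain ⟨Γ0, hΓ0, hpΓ0⟩ := hpg
    have hG0 : ∀ i j : Fin m, (i : ℕ) < d → d ≤ (j : ℕ) → Γ0 i j = 0 := by
      intro i j hi hj
      exact hΓ0.2.1 i j (by omega) (by omega)
    have hG : ∀ i j : Fin m, (i : ℕ) < m - d → m - d ≤ (j : ℕ) → bmap D Γ i j = 0 :=
      fun i j hi hj => bmap_zero_entry D Γ i j (hΓ.2.1 i j hi hj)
    have hb : bmap D b = bmap D b' * bmap D Γ := by rw [hbΓ, bmap_mul]
    have hRm : rmat hd (ampl p n) (bmap D b) =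
        rmat hd (ampl p' n) (bmap D b') * Delta0 m d n Γ0 (bmap D Γ) := by
      rw [hpΓ0, hb]
      exact rmat_mul_Delta0 hd p' (bmap D b') Γ0 (bmap D Γ) hG0 hG
    have hD1 : Rinv' * rmat hd (ampl p n) (bmap D b) = Delta0 m d n Γ0 (bmap D Γ) := by
      rw [hRm, ← mul_assoc, h4, one_mul]
    have hDr : Delta0 m d n Γ0 (bmap D Γ) * Rinv = Rinv' := by
      rw [← hD1, mul_assoc, h1, mul_one]
    have key : rmat hd (ampl p n) (bmap D b) * Pi0 A m d n * Rinv =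
        rmat hd (ampl p' n) (bmap D b') * Pi0 A m d n * Rinv' := by
      rw [hRm, mul_assoc (rmat hd (ampl p' n) (bmap D b')), Delta0_comm_Pi0,
        ← mul_assoc, mul_assoc _ (Delta0 m d n Γ0 (bmap D Γ)) Rinv, hDr]
    rw [resVal_entry hd v u (ampl p n) (bmap D b) Rinv,
      resVal_entry hd v u (ampl p' n) (bmap D b') Rinv', key]
  constructor
  · -- direct sums
    intro n n' b b' hbm hbm' Rinv Rinv' Rinv2 h1 h2 h3 h4 h5 h6
    have hds : rmat hd (ampl p (n + n')) (bmap D (dsum b b')) =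
        dsum (rmat hd (ampl p n) (bmap D b)) (rmat hd (ampl p n') (bmap D b')) := by
      rw [bmap_dsum, ampl_dsum, rmat_dsum]
    have hinv : rmat hd (ampl p (n + n')) (bmap D (dsum b b')) * dsum Rinv Rinv' = 1 := by
      rw [hds, dsum_mul, h1, h3, dsum_one]
    have hR2 : Rinv2 = dsum Rinv Rinv' := by
      calc Rinv2 = Rinv2 * (rmat hd (ampl p (n + n')) (bmap D (dsum b b')) *
            dsum Rinv Rinv') := by rw [hinv, mul_one]
        _ = (Rinv2 * rmat hd (ampl p (n + n')) (bmap D (dsum b b'))) *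
            dsum Rinv Rinv' := by rw [mul_assoc]
        _ = dsum Rinv Rinv' := by rw [h6, one_mul]
    rw [hR2, bmap_dsum, resVal_dsum, dsumW_eq_dsumMat]
  · -- similarity
    intro n s b hbm Rinv Rinv2 h1 h2 h3 h4
    set SA : Mat A n := ((s : Matrix (Fin n) (Fin n) R)).map (algebraMap R A) with hSAdef
    set SAi : Mat A n :=
      (((s⁻¹ : (Matrix (Fin n) (Fin n) R)ˣ) : Matrix (Fin n) (Fin n) R)).map
        (algebraMap R A) with hSAidef
    have hmapmul : ∀ X Y : Matrix (Fin n) (Fin n) R,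
        (X * Y).map (algebraMap R A) = X.map (algebraMap R A) * Y.map (algebraMap R A) :=
      fun X Y => Matrix.map_mul (f := algebraMap R A)
    have hSA1 : SA * SAi = 1 := by
      rw [hSAdef, hSAidef, ← hmapmul, Units.mul_inv]
      exact Matrix.map_one _ (map_zero _) (map_one _)
    have hSA2 : SAi * SA = 1 := by
      rw [hSAdef, hSAidef, ← hmapmul, Units.inv_mul]
      exact Matrix.map_one _ (map_zero _) (map_one _)
    have hcomm : ∀ c : A, SA * Matrix.diagonal (fun _ : Fin n => c) =
        Matrix.diagonal (fun _ : Fin n => c) * SA := by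
      intro c
      ext a b
      rw [Matrix.mul_diagonal, Matrix.diagonal_mul]
      exact Algebra.commutes ((s : Matrix (Fin n) (Fin n) R) a b) c
    set Rm : BMat A m n := rmat hd (ampl p n) (bmap D b) with hRmdef
    set RmS : BMat A m n :=
      rmat hd (ampl p n) (bmap D (simAct (s : Matrix (Fin n) (Fin n) R) b)) with hRmS
    set Lam : BMat A m n := Matrix.diagonal (fun _ : Fin m => SA) with hLam
    set Lami : BMat A m n := Matrix.diagonal (fun _ : Fin m => SAi) with hLami
    set Ds : BMat A m n :=
      Matrix.diagonal (fun i : Fin m => if (i : ℕ) < m - d then SAi else 1) with hDs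
    set Dsi : BMat A m n :=
      Matrix.diagonal (fun i : Fin m => if (i : ℕ) < m - d then SA else 1) with hDsi
    have hLL : Lam * Lami = 1 := by
      rw [hLam, hLami, Matrix.diagonal_mul_diagonal]
      simp [hSA1]
    have hDD : Ds * Dsi = 1 := by
      rw [hDs, hDsi, Matrix.diagonal_mul_diagonal]
      have he : (fun i : Fin m => (if (i : ℕ) < m - d then SAi else 1) *
          (if (i : ℕ) < m - d then SA else 1)) = fun _ => 1 := by
        funext i
        by_cases h : (i : ℕ) < m - d <;> simp [h, hSA2]
      rw [he, Matrix.diagonal_one]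
    have hsim : ∀ x y : Fin m, bmap D (simAct (s : Matrix (Fin n) (Fin n) R) b) x y =
        SA * bmap D b x y := by
      intro x y
      rw [bmap_simAct]
      rfl
    have hRs : RmS = Lam * Rm * Ds := by
      ext i j : 1
      have hrhs : (Lam * Rm * Ds) i j =
          SA * Rm i j * (if (j : ℕ) < m - d then SAi else 1) := by
        rw [hDs, Matrix.mul_diagonal, hLam, Matrix.diagonal_mul]
      rw [hrhs]
      by_cases hj : (j : ℕ) < m - d
      · rw [if_pos hj]
        have hL : RmS i j =
            Matrix.diagonal (fun _ : Fin n => p i ⟨d + (j : ℕ), by omega⟩ 0 0) := by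
          rw [hRmS]; simp [rmat, hj, ampl]
        have hR : Rm i j =
            Matrix.diagonal (fun _ : Fin n => p i ⟨d + (j : ℕ), by omega⟩ 0 0) := by
          rw [hRmdef]; simp [rmat, hj, ampl]
        rw [hL, hR, hcomm, mul_assoc, hSA1, mul_one]
      · rw [if_neg hj, mul_one]
        have hL : RmS i j = bmap D (simAct (s : Matrix (Fin n) (Fin n) R) b) i j := by
          rw [hRmS]; simp [rmat, hj]
        have hR : Rm i j = bmap D b i j := by
          rw [hRmdef]; simp [rmat, hj]
        rw [hL, hR, hsim]
    have hCinv : RmS * (Dsi * Rinv * Lami) = 1 := by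
      rw [hRs]
      have assoc1 : Lam * Rm * Ds * (Dsi * Rinv * Lami) =
          Lam * (Rm * ((Ds * Dsi) * (Rinv * Lami))) := by
        simp only [mul_assoc]
      rw [assoc1, hDD, one_mul, ← mul_assoc Rm Rinv Lami, h1, one_mul, hLL]
    have hR2 : Rinv2 = Dsi * Rinv * Lami := by
      have h5 : Rinv2 * (RmS * (Dsi * Rinv * Lami)) = Rinv2 := by rw [hCinv, mul_one]
      rw [← h5, ← mul_assoc Rinv2 RmS (Dsi * Rinv * Lami), h4, one_mul]
    have hcent : ∀ r c : Fin m, m - d ≤ (r : ℕ) →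
        (Dsi * Rinv * Lami) r c = Rinv r c * SAi := by
      intro r c hr
      rw [hLami, Matrix.mul_diagonal, hDsi, Matrix.diagonal_mul,
        if_neg (Nat.not_lt.mpr hr), one_mul]
    rw [hR2, rmulL_eq, rmulR_eq, ← hSAdef, ← hSAidef]
    unfold resVal
    rw [Finset.mul_sum, Finset.sum_mul]
    refine Finset.sum_congr rfl fun j _ => ?_
    rw [hsim, hcent]
    · simp only [mul_assoc]
    · exact Nat.le_add_right _ _
end
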